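/- arXiv:1202.0580 — 5 statements merged into one kernel-verified Lean document; each statement's English description precedes it below -/
import Mathlib

section
/- Suppose A and B are hyperbolic matrices in SL(2,ℝ) with ‖A‖ = λ₁^m and ‖B‖ = λ₂^n for some m, n > 0 and λ₁, λ₂ > 1. If A maps the most contracted direction s(A) of A to a vector parallel to the most expanded direction u(B) of B, then ‖BA‖ ≤ 2·max{λ₁^m·λ₂^{-n}, λ₂^n·λ₁^{-m}}. -/
noncomputable def act (A : Matrix (Fin 2) (Fin 2) ℝ) :
    EuclideanSpace ℝ (Fin 2) →L[ℝ] EuclideanSpace ℝ (Fin 2) :=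
  Matrix.toEuclideanCLM (𝕜 := ℝ) A

lemma act_apply (M : Matrix (Fin 2) (Fin 2) ℝ) (x : EuclideanSpace ℝ (Fin 2)) (i : Fin 2) :
    act M x i = M i 0 * x 0 + M i 1 * x 1 := by
  show (Matrix.toLin' M) (fun j => x j) i = _
  simp [Matrix.toLin'_apply, Matrix.mulVec, dotProduct, Fin.sum_univ_two]

lemma nsq (v : EuclideanSpace ℝ (Fin 2)) : ‖v‖ ^ 2 = v 0 ^ 2 + v 1 ^ 2 := by
  rw [EuclideanSpace.norm_eq, Real.sq_sqrt (by positivity), Fin.sum_univ_two, Real.norm_eq_abs,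
    Real.norm_eq_abs, sq_abs, sq_abs]

lemma inner2 (x y : EuclideanSpace ℝ (Fin 2)) :
    (inner ℝ x y : ℝ) = x 0 * y 0 + x 1 * y 1 := by
  simp [PiLp.inner_apply, Fin.sum_univ_two]
  ring

def om (x y : EuclideanSpace ℝ (Fin 2)) : ℝ := x 0 * y 1 - x 1 * y 0

lemma om_act (M : Matrix (Fin 2) (Fin 2) ℝ) (x y : EuclideanSpace ℝ (Fin 2)) :
    om (act M x) (act M y) = M.det * om x y := by
  simp [om, act_apply, Matrix.det_fin_two]
  ring

lemma lagrange (x y : EuclideanSpace ℝ (Fin 2)) :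
    (inner ℝ x y : ℝ) ^ 2 + om x y ^ 2 = ‖x‖ ^ 2 * ‖y‖ ^ 2 := by
  rw [inner2, nsq, nsq]
  simp [om]
  ring

lemma eq_of_sq_eq {x a : ℝ} (hx : 0 ≤ x) (ha : 0 ≤ a) (h : x ^ 2 = a ^ 2) : x = a := by
  calc x = Real.sqrt (x ^ 2) := (Real.sqrt_sq hx).symm
  _ = Real.sqrt (a ^ 2) := by rw [h]
  _ = a := Real.sqrt_sq ha


lemma aux_one_le {x : ℝ} (hx : 0 ≤ x) (h : 1 ≤ x ^ 2) : 1 ≤ x := by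
  nlinarith [h, hx]

lemma aux_c0 {K c' : ℝ} (hK : 0 ≤ K) (h : ∀ t : ℝ, 2 * t * c' ≤ t ^ 2 * K) : c' = 0 := by
  by_contra hc
  have hK1 : (0:ℝ) < K + 1 := by linarith
  have h1 := h (c' / (K + 1))
  have e : c' / (K + 1) * (K + 1) = c' := div_mul_cancel₀ _ (ne_of_gt hK1)
  set u : ℝ := c' / (K + 1) with hu
  have hu0 : u ≠ 0 := fun h0 => hc (by rw [h0, zero_mul] at e; exact e.symm)
  have hup : 0 < u ^ 2 := pow_two_pos_of_ne_zero hu0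
  have e2 : 2 * u * c' = 2 * u ^ 2 * (K + 1) := by rw [← e]; ring
  nlinarith [h1, e2, hup, hK]

/-- If `A, B ∈ SL(2,ℝ)` are hyperbolic with `‖A‖ = λ₁^m`, `‖B‖ = λ₂^n` (`m, n > 0`,
`λ₁, λ₂ > 1`) and `A` maps its most contracted direction `s(A)` to a vector parallel
to the most expanded direction `u(B)` of `B`, then
`‖BA‖ ≤ 2·max (λ₁^m·λ₂^{-n}) (λ₂^n·λ₁^{-m})`. -/
theorem stmt2 (A B : Matrix (Fin 2) (Fin 2) ℝ)
    (hdetA : A.det = 1) (hdetB : B.det = 1)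
    (l₁ l₂ m n : ℝ) (hl₁ : 1 < l₁) (hl₂ : 1 < l₂) (hm : 0 < m) (hn : 0 < n)
    (hA : ‖act A‖ = l₁ ^ m) (hB : ‖act B‖ = l₂ ^ n)
    (sA uB : EuclideanSpace ℝ (Fin 2))
    (hsA : ‖sA‖ = 1) (hsA' : ‖act A sA‖ = ‖act A‖⁻¹)
    (huB : ‖uB‖ = 1) (huB' : ‖act B uB‖ = ‖act B‖)
    (hpar : ∃ c : ℝ, act A sA = c • uB) :
    ‖act (B * A)‖ ≤ 2 * max (l₁ ^ m * l₂ ^ (-n)) (l₂ ^ n * l₁ ^ (-m)) := by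
  obtain ⟨c, hc⟩ := hpar
  have hl₁0 : (0:ℝ) < l₁ := by linarith
  have hl₂0 : (0:ℝ) < l₂ := by linarith
  set α := l₁ ^ m with hαdef
  set β := l₂ ^ n with hβdef
  have hα : 0 < α := Real.rpow_pos_of_pos hl₁0 m
  have hβ : 0 < β := Real.rpow_pos_of_pos hl₂0 n
  have hα' : α ≠ 0 := ne_of_gt hα
  have hβ' : β ≠ 0 := ne_of_gt hβ
  rw [hA] at hsA'
  rw [hB] at huB'
  -- |c| = α⁻¹
  have habs : |c| = α⁻¹ := by
    have h : ‖act A sA‖ = |c| * ‖uB‖ := by rw [hc, norm_smul, Real.norm_eq_abs]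
    rw [huB, mul_one] at h
    rw [← h, hsA']
  have hc0 : c ≠ 0 := by
    intro h
    rw [h, abs_zero] at habs
    exact absurd habs.symm (ne_of_gt (inv_pos.mpr hα))
  -- the orthogonal unit vector to sA
  set w : EuclideanSpace ℝ (Fin 2) := (WithLp.equiv 2 (Fin 2 → ℝ)).symm ![-sA 1, sA 0] with hwdef
  have hw0 : w 0 = -sA 1 := rfl
  have hw1 : w 1 = sA 0 := rfl
  have hsAsq : sA 0 ^ 2 + sA 1 ^ 2 = 1 := by
    have h := nsq sA; rw [hsA] at h; linarith [h]
  have hwnorm : ‖w‖ = 1 := by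
    refine eq_of_sq_eq (norm_nonneg w) zero_le_one ?_
    rw [nsq, hw0, hw1, one_pow]
    linear_combination hsAsq
  have homega : om sA w = 1 := by
    show sA 0 * w 1 - sA 1 * w 0 = 1
    rw [hw0, hw1]
    linear_combination hsAsq
  set z := act A w with hzdef
  have hzle : ‖z‖ ≤ α := by
    calc ‖z‖ ≤ ‖act A‖ * ‖w‖ := (act A).le_opNorm w
    _ = α := by rw [hA, hwnorm, mul_one]
  have hom1 : om (act A sA) z = 1 := by
    rw [hzdef, om_act, hdetA, homega, one_mul]
  have hlag1 := lagrange (act A sA) z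
  rw [hom1, hsA'] at hlag1
  set I : ℝ := (inner ℝ (act A sA) z : ℝ) with hIdef
  -- hlag1 : I ^ 2 + 1 ^ 2 = (α⁻¹) ^ 2 * ‖z‖ ^ 2
  have hzge : α ≤ ‖z‖ := by
    have h1 : (1:ℝ) ≤ (α⁻¹ * ‖z‖) ^ 2 := by
      rw [mul_pow]
      linarith [sq_nonneg I, hlag1]
    have h2 : (1:ℝ) ≤ α⁻¹ * ‖z‖ :=
      aux_one_le (mul_nonneg (le_of_lt (inv_pos.mpr hα)) (norm_nonneg z)) h1
    have h3 := mul_le_mul_of_nonneg_left h2 (le_of_lt hα)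
    rw [mul_one, ← mul_assoc, mul_inv_cancel₀ hα', one_mul] at h3
    exact h3
  have hznorm : ‖z‖ = α := le_antisymm hzle hzge
  have hip0 : I = 0 := by
    have e : (α⁻¹) ^ 2 * α ^ 2 = 1 := by field_simp
    have h : I ^ 2 = 0 := by
      rw [hznorm] at hlag1
      linear_combination hlag1 + e
    exact (pow_eq_zero_iff two_ne_zero).mp h
  have huBz : (inner ℝ uB z : ℝ) = 0 := by
    rw [hIdef, hc, real_inner_smul_left] at hip0
    exact (mul_eq_zero.mp hip0).resolve_left hc0
  -- the inner product ⟨B uB, B z⟩ vanishes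
  set c' : ℝ := (inner ℝ (act B uB) (act B z) : ℝ) with hc'def
  have hgzle : ‖act B z‖ ≤ β * α := by
    calc ‖act B z‖ ≤ ‖act B‖ * ‖z‖ := (act B).le_opNorm z
    _ = β * α := by rw [hB, hznorm]
  set K : ℝ := β ^ 2 * α ^ 2 - ‖act B z‖ ^ 2 with hKdef
  have hK0 : 0 ≤ K := by
    rw [hKdef]
    have h := pow_le_pow_left₀ (norm_nonneg (act B z)) hgzle 2
    rw [mul_pow] at h
    linarith [h]
  have hineq : ∀ t : ℝ, 2 * t * c' ≤ t ^ 2 * K := by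
    intro t
    have h1 : ‖act B (uB + t • z)‖ ≤ β * ‖uB + t • z‖ := by
      calc ‖act B (uB + t • z)‖ ≤ ‖act B‖ * ‖uB + t • z‖ := (act B).le_opNorm _
      _ = β * ‖uB + t • z‖ := by rw [hB]
    have h2 : ‖act B (uB + t • z)‖ ^ 2 ≤ β ^ 2 * ‖uB + t • z‖ ^ 2 := by
      have h := pow_le_pow_left₀ (norm_nonneg (act B (uB + t • z))) h1 2
      rw [mul_pow] at h
      linarith [h]
    have e1 : act B (uB + t • z) = act B uB + t • act B z := by
      rw [map_add, map_smul]
    have e2 : ‖act B uB + t • act B z‖ ^ 2 = β ^ 2 + 2 * (t * c') + t ^ 2 * ‖act B z‖ ^ 2 := by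
      rw [norm_add_sq_real, real_inner_smul_right, norm_smul, huB', Real.norm_eq_abs,
        mul_pow, sq_abs, ← hc'def]
      try ring
    have e3 : ‖uB + t • z‖ ^ 2 = 1 + t ^ 2 * α ^ 2 := by
      rw [norm_add_sq_real, real_inner_smul_right, huBz, norm_smul, huB, hznorm,
        Real.norm_eq_abs, mul_pow, sq_abs]
      try ring
    rw [e1, e2, e3] at h2
    rw [hKdef]
    linarith only [h2]
  have hc'0 : c' = 0 := aux_c0 hK0 hineq
  -- norm of B z
  have hgz : ‖act B z‖ = α / β := by
    have hlag2 := lagrange (act B uB) (act B z)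
    rw [← hc'def, hc'0, huB'] at hlag2
    have hom2 : om (act B uB) (act B z) = om uB z := by
      rw [om_act, hdetB, one_mul]
    have hlag3 := lagrange uB z
    rw [huBz, huB, hznorm] at hlag3
    have h4 : β ^ 2 * ‖act B z‖ ^ 2 = α ^ 2 := by
      linear_combination -hlag2 + hlag3 + (om (act B uB) (act B z) + om uB z) * hom2
    refine eq_of_sq_eq (norm_nonneg _) (le_of_lt (div_pos hα hβ)) ?_
    rw [div_pow]
    rw [eq_div_iff (by positivity)]
    linear_combination h4
  -- decomposition of arbitrary vectors
  have hdecomp : ∀ v : EuclideanSpace ℝ (Fin 2),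
      v = (inner ℝ sA v : ℝ) • sA + (inner ℝ w v : ℝ) • w := by
    intro v
    ext i
    fin_cases i <;>
      simp only [Fin.zero_eta, Fin.mk_one, Fin.isValue, inner2, hw0, hw1, PiLp.add_apply,
        PiLp.smul_apply, smul_eq_mul]
    · show v 0 = _
      linear_combination (-(v 0)) * hsAsq
    · show v 1 = _
      linear_combination (-(v 1)) * hsAsq
  -- the operator norm bound
  have hbound : ∀ v : EuclideanSpace ℝ (Fin 2),
      ‖act (B * A) v‖ ≤ (β / α + α / β) * ‖v‖ := by
    intro v
    have hmul : act (B * A) v = act B (act A v) := by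
      show Matrix.toEuclideanCLM (𝕜 := ℝ) (B * A) v = _
      rw [map_mul]
      rfl
    have hexp : act (B * A) v
        = (inner ℝ sA v : ℝ) • (c • act B uB) + (inner ℝ w v : ℝ) • act B z := by
      rw [hmul]
      conv_lhs => rw [hdecomp v]
      rw [map_add, map_smul, map_smul, map_add, map_smul, map_smul, hc, map_smul]
    have hp : |(inner ℝ sA v : ℝ)| ≤ ‖v‖ := by
      have h := abs_real_inner_le_norm sA v
      rwa [hsA, one_mul] at h
    have hq : |(inner ℝ w v : ℝ)| ≤ ‖v‖ := by
      have h := abs_real_inner_le_norm w v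
      rwa [hwnorm, one_mul] at h
    calc ‖act (B * A) v‖
        ≤ ‖(inner ℝ sA v : ℝ) • (c • act B uB)‖ + ‖(inner ℝ w v : ℝ) • act B z‖ := by
          rw [hexp]; exact norm_add_le _ _
      _ = |(inner ℝ sA v : ℝ)| * (|c| * β) + |(inner ℝ w v : ℝ)| * (α / β) := by
          rw [norm_smul, norm_smul, norm_smul, huB', hgz, Real.norm_eq_abs,
            Real.norm_eq_abs, Real.norm_eq_abs]
      _ ≤ ‖v‖ * (|c| * β) + ‖v‖ * (α / β) := by
          refine add_le_add
            (mul_le_mul_of_nonneg_right hp (mul_nonneg (abs_nonneg c) (le_of_lt hβ)))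
            (mul_le_mul_of_nonneg_right hq (le_of_lt (div_pos hα hβ)))
      _ = (β / α + α / β) * ‖v‖ := by
          rw [habs]; field_simp
  have hop : ‖act (B * A)‖ ≤ β / α + α / β :=
    ContinuousLinearMap.opNorm_le_bound _
      (le_of_lt (add_pos (div_pos hβ hα) (div_pos hα hβ))) hbound
  have hneg1 : l₂ ^ (-n) = β⁻¹ := by rw [Real.rpow_neg (le_of_lt hl₂0)]
  have hneg2 : l₁ ^ (-m) = α⁻¹ := by rw [Real.rpow_neg (le_of_lt hl₁0)]
  rw [hneg1, hneg2, ← div_eq_mul_inv, ← div_eq_mul_inv]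
  have h1 : α / β ≤ max (α / β) (β / α) := le_max_left _ _
  have h2 : β / α ≤ max (α / β) (β / α) := le_max_right _ _
  linarith [hop]
end

section
/- Let λ > 1 and f(λ, θ) = λ²/(sin²θ + λ⁴cos²θ). Then for every i ≥ 1 and all θ, the i-th partial derivative of f with respect to θ satisfies |∂_θ^i f(λ, θ)| ≤ 4^i · (i!)² · λ^{2i} · |f(λ, θ)|. -/
open Real Finset


noncomputable def f (lam θ : ℝ) : ℝ :=
  lam ^ 2 / (Real.sin θ ^ 2 + lam ^ 4 * Real.cos θ ^ 2)

noncomputable def Dd (lam θ : ℝ) : ℝ := Real.sin θ ^ 2 + lam ^ 4 * Real.cos θ ^ 2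

lemma diff_iter (g : ℝ → ℝ) (hg : ContDiff ℝ (⊤ : ℕ∞) g) (m : ℕ) :
    Differentiable ℝ (iteratedDeriv m g) :=
  hg.differentiable_iteratedDeriv m (by exact_mod_cast WithTop.coe_lt_top _)

lemma my_iteratedDeriv_mul (g h : ℝ → ℝ) (hg : ContDiff ℝ (⊤ : ℕ∞) g)
    (hh : ContDiff ℝ (⊤ : ℕ∞) h) (n : ℕ) :
    iteratedDeriv n (fun x => g x * h x) = fun x => ∑ k ∈ range (n + 1),
      (n.choose k : ℝ) * iteratedDeriv k g x * iteratedDeriv (n - k) h x := by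
  induction n with
  | zero => simp
  | succ n ih =>
    funext x
    rw [iteratedDeriv_succ, ih]
    have hdiff : ∀ k ∈ range (n + 1), DifferentiableAt ℝ
        (fun x => (n.choose k : ℝ) * iteratedDeriv k g x * iteratedDeriv (n - k) h x) x := by
      intro k _
      exact (((diff_iter g hg k).const_mul _).mul (diff_iter h hh (n - k))).differentiableAt
    rw [deriv_fun_sum hdiff]
    have hterm : ∀ k ∈ range (n + 1),
        deriv (fun x => (n.choose k : ℝ) * iteratedDeriv k g x * iteratedDeriv (n - k) h x) x
        = (n.choose k : ℝ) * iteratedDeriv (k+1) g x * iteratedDeriv (n - k) h x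
          + (n.choose k : ℝ) * iteratedDeriv k g x * iteratedDeriv (n - k + 1) h x := by
      intro k _
      have h1 : DifferentiableAt ℝ (fun x => (n.choose k : ℝ) * iteratedDeriv k g x) x :=
        ((diff_iter g hg k).const_mul _).differentiableAt
      have h2 : DifferentiableAt ℝ (iteratedDeriv (n - k) h) x :=
        (diff_iter h hh (n - k)).differentiableAt
      rw [show (fun x => (n.choose k : ℝ) * iteratedDeriv k g x * iteratedDeriv (n - k) h x)
          = fun x => ((n.choose k : ℝ) * iteratedDeriv k g x) * iteratedDeriv (n - k) h x from rfl,
        deriv_fun_mul h1 h2, deriv_const_mul _ (diff_iter g hg k).differentiableAt,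
        ← iteratedDeriv_succ, ← iteratedDeriv_succ]
    rw [Finset.sum_congr rfl hterm, Finset.sum_add_distrib]
    rw [Finset.sum_range_succ' (fun k => ((n+1).choose k : ℝ) * iteratedDeriv k g x
        * iteratedDeriv (n + 1 - k) h x) (n+1)]
    simp only [Nat.succ_sub_succ, Nat.choose_zero_right, Nat.cast_one, one_mul, Nat.sub_zero]
    have pascal : ∀ k ∈ range (n+1), (((n+1).choose (k+1) : ℝ) * iteratedDeriv (k+1) g x
        * iteratedDeriv (n - k) h x)
        = (n.choose k : ℝ) * iteratedDeriv (k+1) g x * iteratedDeriv (n - k) h x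
          + (n.choose (k+1) : ℝ) * iteratedDeriv (k+1) g x * iteratedDeriv (n - k) h x := by
      intro k _
      have : ((n+1).choose (k+1) : ℝ) = (n.choose k : ℝ) + (n.choose (k+1) : ℝ) := by
        exact_mod_cast Nat.choose_succ_succ n k
      rw [this]; ring
    rw [Finset.sum_congr rfl pascal, Finset.sum_add_distrib]
    have hB : ∑ k ∈ range (n + 1),
        (n.choose k : ℝ) * iteratedDeriv k g x * iteratedDeriv (n - k + 1) h x
        = ∑ k ∈ range (n + 1),
        (n.choose (k+1) : ℝ) * iteratedDeriv (k+1) g x * iteratedDeriv (n - k) h x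
          + iteratedDeriv 0 g x * iteratedDeriv (n + 1) h x := by
      rw [Finset.sum_range_succ' (fun k => (n.choose k : ℝ) * iteratedDeriv k g x
          * iteratedDeriv (n - k + 1) h x) n]
      rw [Finset.sum_range_succ (fun k => (n.choose (k+1) : ℝ) * iteratedDeriv (k+1) g x
          * iteratedDeriv (n - k) h x) n]
      simp only [Nat.choose_zero_right, Nat.cast_one, one_mul, Nat.sub_zero,
        Nat.choose_succ_self, Nat.cast_zero, zero_mul, add_zero]
      congr 1
      apply Finset.sum_congr rfl
      intro k hk
      have hk' : k < n := Finset.mem_range.mp hk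
      have : n - (k + 1) + 1 = n - k := by omega
      rw [this]
    rw [hB]
    ring


lemma Dd_contDiff (lam : ℝ) : ContDiff ℝ (⊤ : ℕ∞) (Dd lam) := by
  unfold Dd
  exact (Real.contDiff_sin.pow 2).add (contDiff_const.mul (Real.contDiff_cos.pow 2))

lemma Dd_ge_one (lam : ℝ) (hlam : 1 < lam) (θ : ℝ) : 1 ≤ Dd lam θ := by
  have h1 := Real.sin_sq_add_cos_sq θ
  have h4 : (1:ℝ) ≤ lam ^ 4 := one_le_pow₀ hlam.le
  have hc := sq_nonneg (Real.cos θ)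
  unfold Dd
  nlinarith

lemma Dd_iteratedDeriv (lam : ℝ) (k : ℕ) :
    iteratedDeriv (k + 1) (Dd lam) =
      fun θ => (1 - lam ^ 4) * 2 ^ k * Real.sin (2 * θ + k * (π / 2)) := by
  induction k with
  | zero =>
    funext θ
    rw [iteratedDeriv_one]
    have hs : HasDerivAt (fun θ => Real.sin θ ^ 2) (2 * Real.sin θ ^ 1 * Real.cos θ) θ :=
      (Real.hasDerivAt_sin θ).pow 2
    have hc : HasDerivAt (fun θ => Real.cos θ ^ 2) (2 * Real.cos θ ^ 1 * (-Real.sin θ)) θ :=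
      (Real.hasDerivAt_cos θ).pow 2
    have hD : HasDerivAt (Dd lam)
        (2 * Real.sin θ ^ 1 * Real.cos θ + lam ^ 4 * (2 * Real.cos θ ^ 1 * (-Real.sin θ))) θ :=
      hs.add (hc.const_mul _)
    rw [hD.deriv]
    rw [show ((2:ℝ) * θ + (0:ℕ) * (π/2)) = 2 * θ by push_cast; ring, Real.sin_two_mul]
    ring
  | succ k ih =>
    funext θ
    rw [iteratedDeriv_succ, ih]
    have h : HasDerivAt (fun θ => (1 - lam ^ 4) * 2 ^ k * Real.sin (2 * θ + k * (π / 2)))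
        ((1 - lam ^ 4) * 2 ^ k * (Real.cos (2 * θ + k * (π / 2)) * 2)) θ := by
      have hinner : HasDerivAt (fun θ : ℝ => 2 * θ + (k : ℝ) * (π / 2)) 2 θ := by
        simpa using ((hasDerivAt_id θ).const_mul (2:ℝ)).add_const ((k:ℝ) * (π / 2))
      exact ((Real.hasDerivAt_sin _).comp θ hinner).const_mul _
    rw [h.deriv]
    have he : (2 * θ + ((k:ℕ) + 1 : ℕ) * (π / 2)) = (2 * θ + (k:ℝ) * (π / 2)) + π / 2 := by
      push_cast; ring
    rw [he, Real.sin_add_pi_div_two]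
    ring

lemma Dd_deriv_bound (lam : ℝ) (hlam : 1 < lam) (k : ℕ) (hk : 1 ≤ k) (θ : ℝ) :
    |iteratedDeriv (k + 1) (Dd lam) θ| ≤ 2 ^ k * lam ^ (2 * (k + 1)) := by
  rw [Dd_iteratedDeriv]
  have h14 : (1:ℝ) ≤ lam ^ 4 := one_le_pow₀ hlam.le
  have h1 : |(1 - lam ^ 4) * 2 ^ k * Real.sin (2 * θ + k * (π / 2))|
      ≤ |1 - lam ^ 4| * 2 ^ k := by
    rw [abs_mul]
    have h2 : |(1 - lam ^ 4) * 2 ^ k| = |1 - lam ^ 4| * 2 ^ k := by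
      rw [abs_mul, abs_of_nonneg (show (0:ℝ) ≤ 2 ^ k by positivity)]
    rw [h2] at *
    exact mul_le_of_le_one_right (by positivity) (Real.abs_sin_le_one _)
  refine h1.trans ?_
  have h3 : |1 - lam ^ 4| = lam ^ 4 - 1 := by
    rw [abs_sub_comm, abs_of_nonneg (by linarith)]
  rw [h3]
  have h4 : lam ^ 4 - 1 ≤ lam ^ (2 * (k + 1)) := by
    have : lam ^ 4 ≤ lam ^ (2 * (k + 1)) := pow_le_pow_right₀ hlam.le (by omega)
    linarith
  calc (lam ^ 4 - 1) * 2 ^ k ≤ lam ^ (2 * (k+1)) * 2 ^ k :=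
        mul_le_mul_of_nonneg_right h4 (by positivity)
    _ = 2 ^ k * lam ^ (2 * (k + 1)) := by ring

lemma Dd_deriv_one_bound (lam : ℝ) (hlam : 1 < lam) (θ : ℝ) :
    |iteratedDeriv 1 (Dd lam) θ| ≤ lam ^ 2 * Dd lam θ := by
  have h := Dd_iteratedDeriv lam 0
  rw [show (0:ℕ) + 1 = 1 from rfl] at h
  rw [h]
  simp only [pow_zero, mul_one, Nat.cast_zero, zero_mul, add_zero]
  rw [Real.sin_two_mul]
  have hlam0 : (0:ℝ) < lam := lt_trans one_pos hlam
  have hl2 : (0:ℝ) < lam ^ 2 := by positivity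
  have h14 : (0:ℝ) ≤ lam ^ 4 - 1 := by
    have := one_le_pow₀ (n := 4) hlam.le; linarith
  have hD1 : (1:ℝ) ≤ Dd lam θ := Dd_ge_one lam hlam θ
  have key : 2 * lam ^ 2 * |Real.sin θ * Real.cos θ| ≤ Dd lam θ := by
    unfold Dd
    rw [abs_mul]
    nlinarith [sq_nonneg (|Real.sin θ| - lam ^ 2 * |Real.cos θ|), sq_abs (Real.sin θ),
      sq_abs (Real.cos θ), abs_nonneg (Real.sin θ), abs_nonneg (Real.cos θ)]
  have habs : |(1 - lam ^ 4) * (2 * Real.sin θ * Real.cos θ)|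
      = (lam ^ 4 - 1) * (2 * |Real.sin θ * Real.cos θ|) := by
    rw [abs_mul, abs_sub_comm, abs_of_nonneg h14,
      show (2:ℝ) * Real.sin θ * Real.cos θ = 2 * (Real.sin θ * Real.cos θ) by ring,
      abs_mul, abs_two]
  rw [habs]
  refine le_of_mul_le_mul_left ?_ hl2
  calc lam ^ 2 * ((lam ^ 4 - 1) * (2 * |Real.sin θ * Real.cos θ|))
      = (lam ^ 4 - 1) * (2 * lam ^ 2 * |Real.sin θ * Real.cos θ|) := by ring
    _ ≤ (lam ^ 4 - 1) * Dd lam θ := mul_le_mul_of_nonneg_left key h14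
    _ ≤ lam ^ 4 * Dd lam θ := by nlinarith
    _ = lam ^ 2 * (lam ^ 2 * Dd lam θ) := by ring
noncomputable def B (lam : ℝ) (n : ℕ) : ℝ := 4 ^ n * (n.factorial : ℝ) ^ 2 * lam ^ (2 * n)


lemma iter_const (c : ℝ) (n : ℕ) : iteratedDeriv (n + 1) (fun _ : ℝ => c) = fun _ => 0 := by
  induction n with
  | zero => funext x; rw [iteratedDeriv_one]; simp
  | succ n ih => rw [iteratedDeriv_succ, ih]; funext x; simp

lemma f_eq (lam : ℝ) : f lam = fun θ => lam ^ 2 / Dd lam θ := rfl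

lemma f_pos (lam : ℝ) (hlam : 1 < lam) (θ : ℝ) : 0 < f lam θ := by
  rw [f_eq]
  have hD : (0:ℝ) < Dd lam θ := lt_of_lt_of_le one_pos (Dd_ge_one lam hlam θ)
  have : (0:ℝ) < lam ^ 2 := by positivity
  exact div_pos this hD

lemma f_contDiff (lam : ℝ) (hlam : 1 < lam) : ContDiff ℝ (⊤ : ℕ∞) (f lam) := by
  rw [f_eq]
  exact contDiff_const.div (Dd_contDiff lam)
    (fun θ => ne_of_gt (lt_of_lt_of_le one_pos (Dd_ge_one lam hlam θ)))

lemma prod_eq (lam : ℝ) (hlam : 1 < lam) :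
    (fun θ => Dd lam θ * f lam θ) = fun _ => lam ^ 2 := by
  funext θ
  have hD : Dd lam θ ≠ 0 := ne_of_gt (lt_of_lt_of_le one_pos (Dd_ge_one lam hlam θ))
  rw [f_eq]
  field_simp

-- combinatorial per-term bound
lemma comb_bound (lam : ℝ) (hlam : 1 < lam) (m k : ℕ) (hk : k ≤ m) :
    ((m+1).choose (k+1) : ℝ) * (2 ^ k * lam ^ (2 * (k+1)) * B lam (m - k))
      ≤ (1/2 : ℝ) ^ (k+1) * B lam (m+1) := by
  have hlam0 : (0:ℝ) < lam := lt_trans one_pos hlam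
  -- natural number inequality
  have hnat : (m+1).choose (k+1) * ((m-k).factorial)^2 * (2^k * 2^(k+1) * 4^(m-k))
      ≤ 4^(m+1) * ((m+1).factorial)^2 := by
    have h1 : (m+1).choose (k+1) * (m-k).factorial ≤ (m+1).factorial := by
      have hle : k + 1 ≤ m + 1 := by omega
      have heq := Nat.choose_mul_factorial_mul_factorial hle
      rw [show m + 1 - (k+1) = m - k by omega] at heq
      calc (m+1).choose (k+1) * (m-k).factorial
          ≤ ((m+1).choose (k+1) * (k+1).factorial) * (m-k).factorial := by
            exact Nat.mul_le_mul_right _ (Nat.le_mul_of_pos_right _ (Nat.factorial_pos _))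
        _ = (m+1).factorial := heq
    have h2 : (m-k).factorial ≤ (m+1).factorial := Nat.factorial_le (by omega)
    have h3 : 2^k * 2^(k+1) * 4^(m-k) ≤ 4^(m+1) := by
      have e1 : 2^k * 2^(k+1) = 2 * 4^k := by
        rw [← pow_add, show k + (k+1) = 2*k+1 by omega, pow_succ, pow_mul]
        ring
      rw [e1, mul_assoc, ← pow_add, show k + (m-k) = m by omega]
      calc 2 * 4^m ≤ 4 * 4^m := by
            exact Nat.mul_le_mul_right _ (by norm_num)
        _ = 4^(m+1) := by rw [pow_succ]; ring
    calc (m+1).choose (k+1) * ((m-k).factorial)^2 * (2^k * 2^(k+1) * 4^(m-k))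
        = ((m+1).choose (k+1) * (m-k).factorial) * (m-k).factorial
            * (2^k * 2^(k+1) * 4^(m-k)) := by ring
      _ ≤ ((m+1).factorial * (m+1).factorial) * 4^(m+1) :=
          Nat.mul_le_mul (Nat.mul_le_mul h1 h2) h3
      _ = 4^(m+1) * ((m+1).factorial)^2 := by ring
  have hreal : ((m+1).choose (k+1) : ℝ) * (((m-k).factorial : ℝ))^2 * (2^k * 2^(k+1) * 4^(m-k))
      ≤ 4^(m+1) * (((m+1).factorial : ℝ))^2 := by exact_mod_cast hnat
  -- lambda powers combine
  have hpow : lam ^ (2 * (k+1)) * lam ^ (2 * (m-k)) = lam ^ (2 * (m+1)) := by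
    rw [← pow_add, show 2*(k+1) + 2*(m-k) = 2*(m+1) by omega]
  unfold B
  have h2p : (0:ℝ) < (2:ℝ)^(k+1) := by positivity
  have hLp : (0:ℝ) < lam ^ (2*(m+1)) := by positivity
  have hhalf : ((1:ℝ)/2)^(k+1) = 1 / 2^(k+1) := by rw [div_pow, one_pow]
  rw [hhalf]
  rw [show ((m+1).choose (k+1) : ℝ) * (2 ^ k * lam ^ (2 * (k+1)) *
      (4 ^ (m-k) * (((m-k).factorial : ℝ))^2 * lam ^ (2 * (m-k))))
    = (((m+1).choose (k+1) : ℝ) * (((m-k).factorial : ℝ))^2 * (2^k * 4^(m-k)))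
        * (lam ^ (2 * (k+1)) * lam ^ (2 * (m-k))) by ring, hpow]
  rw [show (1 / (2:ℝ)^(k+1)) * (4 ^ (m+1) * (((m+1).factorial : ℝ))^2 * lam ^ (2 * (m+1)))
    = ((4 ^ (m+1) * (((m+1).factorial : ℝ))^2) / 2^(k+1)) * lam ^ (2 * (m+1)) by ring]
  apply mul_le_mul_of_nonneg_right _ hLp.le
  rw [le_div_iff₀ h2p]
  calc ((m+1).choose (k+1) : ℝ) * (((m-k).factorial : ℝ))^2 * (2^k * 4^(m-k)) * 2^(k+1)
      = ((m+1).choose (k+1) : ℝ) * (((m-k).factorial : ℝ))^2 * (2^k * 2^(k+1) * 4^(m-k)) := by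
        ring
    _ ≤ 4^(m+1) * (((m+1).factorial : ℝ))^2 := hreal

lemma main_bound (lam : ℝ) (hlam : 1 < lam) (n : ℕ) (θ : ℝ) :
    |iteratedDeriv n (f lam) θ| ≤ B lam n * f lam θ := by
  induction n using Nat.strong_induction_on generalizing θ with
  | _ n IH =>
    match n with
    | 0 =>
      simp only [iteratedDeriv_zero, B, pow_zero, Nat.factorial_zero, Nat.cast_one, one_pow,
        mul_zero, one_mul, mul_one]
      rw [abs_of_pos (f_pos lam hlam θ)]
    | (m+1) =>
      have hDpos : (0:ℝ) < Dd lam θ := lt_of_lt_of_le one_pos (Dd_ge_one lam hlam θ)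
      have hfpos := f_pos lam hlam θ
      -- the Leibniz identity applied to D·f = const
      have hsum0 : ∑ k ∈ range (m + 2), ((m+1).choose k : ℝ) * iteratedDeriv k (Dd lam) θ
          * iteratedDeriv (m + 1 - k) (f lam) θ = 0 := by
        have hL := my_iteratedDeriv_mul (Dd lam) (f lam) (Dd_contDiff lam)
          (f_contDiff lam hlam) (m+1)
        rw [prod_eq lam hlam, iter_const] at hL
        exact (congrFun hL θ).symm
      -- peel off k = 0
      have hkey : Dd lam θ * iteratedDeriv (m+1) (f lam) θ
          = -∑ k ∈ range (m + 1), ((m+1).choose (k+1) : ℝ)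
              * iteratedDeriv (k+1) (Dd lam) θ * iteratedDeriv (m - k) (f lam) θ := by
        rw [Finset.sum_range_succ' (fun k => ((m+1).choose k : ℝ) * iteratedDeriv k (Dd lam) θ
          * iteratedDeriv (m + 1 - k) (f lam) θ) (m+1)] at hsum0
        simp only [Nat.choose_zero_right, Nat.cast_one, one_mul, Nat.sub_zero,
          iteratedDeriv_zero, Nat.succ_sub_succ] at hsum0
        linarith [hsum0]
      -- bound
      have habs : Dd lam θ * |iteratedDeriv (m+1) (f lam) θ|
          ≤ ∑ k ∈ range (m + 1), |((m+1).choose (k+1) : ℝ)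
              * iteratedDeriv (k+1) (Dd lam) θ * iteratedDeriv (m - k) (f lam) θ| := by
        rw [← abs_of_pos hDpos, ← abs_mul, hkey, abs_neg]
        exact Finset.abs_sum_le_sum_abs _ _
      have hterm : ∀ k ∈ range (m + 1),
          |((m+1).choose (k+1) : ℝ) * iteratedDeriv (k+1) (Dd lam) θ
            * iteratedDeriv (m - k) (f lam) θ|
          ≤ ((m+1).choose (k+1) : ℝ) * (2^k * lam^(2*(k+1)) * B lam (m-k))
              * (Dd lam θ * f lam θ) := by
        intro k hk
        have hkm : k ≤ m := by have := Finset.mem_range.mp hk; omega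
        have hC : (0:ℝ) ≤ ((m+1).choose (k+1) : ℝ) := Nat.cast_nonneg _
        have hIH : |iteratedDeriv (m - k) (f lam) θ| ≤ B lam (m-k) * f lam θ :=
          IH (m - k) (by omega) θ
        have hBpos : (0:ℝ) ≤ B lam (m-k) := by
          unfold B; positivity
        rw [abs_mul, abs_mul, Nat.abs_cast]
        rcases Nat.eq_zero_or_pos k with hk0 | hk1
        · subst hk0
          have hD1 := Dd_deriv_one_bound lam hlam θ
          calc ((m+1).choose 1 : ℝ) * |iteratedDeriv 1 (Dd lam) θ|
                * |iteratedDeriv (m - 0) (f lam) θ|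
              ≤ ((m+1).choose 1 : ℝ) * (lam^2 * Dd lam θ) * (B lam (m-0) * f lam θ) := by
                apply mul_le_mul
                · exact mul_le_mul_of_nonneg_left hD1 hC
                · exact hIH
                · exact abs_nonneg _
                · positivity
            _ = ((m+1).choose (0+1) : ℝ) * (2^0 * lam^(2*(0+1)) * B lam (m-0))
                * (Dd lam θ * f lam θ) := by ring
        · have hD2 := Dd_deriv_bound lam hlam k hk1 θ
          calc ((m+1).choose (k+1) : ℝ) * |iteratedDeriv (k+1) (Dd lam) θ|
                * |iteratedDeriv (m - k) (f lam) θ|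
              ≤ ((m+1).choose (k+1) : ℝ) * (2^k * lam^(2*(k+1))) * (B lam (m-k) * f lam θ) := by
                apply mul_le_mul
                · exact mul_le_mul_of_nonneg_left hD2 hC
                · exact hIH
                · exact abs_nonneg _
                · positivity
            _ = ((m+1).choose (k+1) : ℝ) * (2^k * lam^(2*(k+1)) * B lam (m-k))
                * (1 * f lam θ) := by ring
            _ ≤ ((m+1).choose (k+1) : ℝ) * (2^k * lam^(2*(k+1)) * B lam (m-k))
                * (Dd lam θ * f lam θ) := by
                apply mul_le_mul_of_nonneg_left
                · exact mul_le_mul_of_nonneg_right (by linarith [Dd_ge_one lam hlam θ]) hfpos.le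
                · positivity
      have hterm2 : ∀ k ∈ range (m + 1),
          ((m+1).choose (k+1) : ℝ) * (2^k * lam^(2*(k+1)) * B lam (m-k))
              * (Dd lam θ * f lam θ)
          ≤ (1/2:ℝ)^(k+1) * B lam (m+1) * (Dd lam θ * f lam θ) := by
        intro k hk
        have hkm : k ≤ m := by have := Finset.mem_range.mp hk; omega
        exact mul_le_mul_of_nonneg_right (comb_bound lam hlam m k hkm) (by positivity)
      have hgeo : ∑ k ∈ range (m + 1), ((1:ℝ)/2)^(k+1) ≤ 1 := by
        have he : ∑ k ∈ range (m + 1), ((1:ℝ)/2)^(k+1)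
            = (1/2) * ∑ k ∈ range (m + 1), ((1:ℝ)/2)^k := by
          rw [Finset.mul_sum]
          exact Finset.sum_congr rfl fun k _ => by rw [pow_succ']
        rw [he]
        have := sum_geometric_two_le (m+1)
        linarith
      have hfinal : Dd lam θ * |iteratedDeriv (m+1) (f lam) θ|
          ≤ Dd lam θ * (B lam (m+1) * f lam θ) := by
        calc Dd lam θ * |iteratedDeriv (m+1) (f lam) θ|
            ≤ ∑ k ∈ range (m + 1), |((m+1).choose (k+1) : ℝ)
              * iteratedDeriv (k+1) (Dd lam) θ * iteratedDeriv (m - k) (f lam) θ| := habs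
          _ ≤ ∑ k ∈ range (m + 1), (1/2:ℝ)^(k+1) * B lam (m+1) * (Dd lam θ * f lam θ) :=
              Finset.sum_le_sum (fun k hk => (hterm k hk).trans (hterm2 k hk))
          _ = (∑ k ∈ range (m + 1), ((1:ℝ)/2)^(k+1)) * (B lam (m+1) * (Dd lam θ * f lam θ)) := by
              rw [Finset.sum_mul]
              exact Finset.sum_congr rfl fun k _ => by ring
          _ ≤ 1 * (B lam (m+1) * (Dd lam θ * f lam θ)) := by
              apply mul_le_mul_of_nonneg_right hgeo
              have : 0 ≤ B lam (m+1) := by unfold B; positivity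
              positivity
          _ = Dd lam θ * (B lam (m+1) * f lam θ) := by ring
      exact le_of_mul_le_mul_left hfinal hDpos

/-- For `λ > 1` and every `i ≥ 1`, the `i`-th derivative in `θ` of
`f(λ, θ) = λ²/(sin²θ + λ⁴cos²θ)` satisfies
`|∂_θ^i f| ≤ 4^i · (i!)² · λ^{2i} · |f(λ,θ)|`. -/
theorem stmt6 (lam : ℝ) (hlam : 1 < lam) (i : ℕ) (hi : 1 ≤ i) (θ : ℝ) :
    |iteratedDeriv i (f lam) θ| ≤
      4 ^ i * (Nat.factorial i : ℝ) ^ 2 * lam ^ (2 * i) * |f lam θ| := by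
  have h := main_bound lam hlam i θ
  rw [abs_of_pos (f_pos lam hlam θ)]
  unfold B at h
  linarith
end

section
/- Let ω be irrational and T: S¹ → S¹ the rotation x ↦ x + 2πω, with S¹ = ℝ/2πℤ. Let I ⊂ S¹ be an interval with 0 < |I| < π/4, let r be the minimum over x ∈ I of the first return time of x to I under T, and let r̂ be the maximum over x ∈ I/10 (the concentric interval of one-tenth length) of the first return time to I/10. If ω has bounded type with constant M (i.e. q_{n+1} < M·q_n for all denominators q_n of the continued fraction expansion of ω), then r/r̂ ≥ M^{-10}. -/
open GenContFract

variable (ω : ℝ)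

/-- integer continuants, mirroring `(GenContFract.of ω).contsAux`. -/
noncomputable def cfC : ℕ → ℤ × ℤ
  | 0 => (1, 0)
  | 1 => (⌊ω⌋, 1)
  | n+2 =>
    let b : ℤ := ((GenContFract.IntFractPair.stream ω (n+1)).map
        GenContFract.IntFractPair.b).getD 0
    (b * (cfC (n+1)).1 + (cfC n).1, b * (cfC (n+1)).2 + (cfC n).2)

variable {ω}

theorem stream_ne_none (hirr : Irrational ω) (n : ℕ) :
    GenContFract.IntFractPair.stream ω n ≠ none := by
  intro hn
  have hterm : (GenContFract.of ω).Terminates := by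
    cases n with
    | zero => simp [GenContFract.IntFractPair.stream_zero] at hn
    | succ k =>
      exact ⟨k, of_terminatedAt_n_iff_succ_nth_intFractPair_stream_eq_none.2 hn⟩
  obtain ⟨q, hq⟩ := (GenContFract.terminates_iff_rat ω).1 hterm
  exact hirr ⟨q, hq.symm⟩

theorem not_terminatedAt (hirr : Irrational ω) (n : ℕ) :
    ¬(GenContFract.of ω).TerminatedAt n :=
  fun H => stream_ne_none hirr (n+1)
    (of_terminatedAt_n_iff_succ_nth_intFractPair_stream_eq_none.1 H)

/-- the n-th IntFractPair of the stream (total function). -/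
noncomputable def ifs (ω : ℝ) (n : ℕ) : GenContFract.IntFractPair ℝ :=
  (GenContFract.IntFractPair.stream ω n).getD ⟨0, 0⟩

theorem stream_eq (hirr : Irrational ω) (n : ℕ) :
    GenContFract.IntFractPair.stream ω n = some (ifs ω n) := by
  rcases Option.ne_none_iff_exists'.1 (stream_ne_none hirr n) with ⟨p, hp⟩
  simp [ifs, hp]

theorem fr_pos (hirr : Irrational ω) (n : ℕ) : 0 < (ifs ω n).fr := by
  rcases (GenContFract.IntFractPair.nth_stream_fr_nonneg (stream_eq hirr n)).lt_or_eq
    with H | H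
  · exact H
  · exact absurd (GenContFract.IntFractPair.stream_eq_none_of_fr_eq_zero
      (stream_eq hirr n) H.symm) (stream_ne_none hirr (n+1))

theorem of_s_get (hirr : Irrational ω) (n : ℕ) :
    (GenContFract.of ω).s.get? n = some ⟨1, ((ifs ω (n+1)).b : ℝ)⟩ :=
  get?_of_eq_some_of_succ_get?_intFractPair_stream (stream_eq hirr (n+1))

theorem one_le_b (hirr : Irrational ω) (n : ℕ) : 1 ≤ (ifs ω (n+1)).b := by
  have hpd : (GenContFract.of ω).partDens.get? n = some ((ifs ω (n+1)).b : ℝ) := by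
    simp [GenContFract.partDens, Stream'.Seq.map_get?, of_s_get hirr n]
  have := GenContFract.of_one_le_get?_partDen hpd
  exact_mod_cast this

theorem cfC_cast (hirr : Irrational ω) : ∀ n : ℕ,
    ((GenContFract.of ω).contsAux n).a = (((cfC ω n).1 : ℤ) : ℝ) ∧
    ((GenContFract.of ω).contsAux n).b = (((cfC ω n).2 : ℤ) : ℝ) := by
  have H : ∀ n : ℕ,
      (((GenContFract.of ω).contsAux n).a = (((cfC ω n).1 : ℤ) : ℝ) ∧
      ((GenContFract.of ω).contsAux n).b = (((cfC ω n).2 : ℤ) : ℝ)) ∧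
      (((GenContFract.of ω).contsAux (n+1)).a = (((cfC ω (n+1)).1 : ℤ) : ℝ) ∧
      ((GenContFract.of ω).contsAux (n+1)).b = (((cfC ω (n+1)).2 : ℤ) : ℝ)) := by
    intro n
    induction n with
    | zero =>
      constructor
      · simp [GenContFract.contsAux, cfC]
      · simp [GenContFract.contsAux, cfC, GenContFract.of_h_eq_floor]
    | succ k ih =>
      refine ⟨ih.2, ?_⟩
      have hrec := GenContFract.contsAux_recurrence (g := GenContFract.of ω)
        (of_s_get hirr k) rfl rfl
      have hb : ((GenContFract.IntFractPair.stream ω (k+1)).map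
          GenContFract.IntFractPair.b).getD 0 = (ifs ω (k+1)).b := by
        rw [stream_eq hirr (k+1)]; rfl
      rw [hrec]
      constructor
      · show GenContFract.nextNum _ _ _ _ = _
        rw [GenContFract.nextNum, ih.1.1, ih.2.1]
        show _ = ((cfC ω (k+2)).1 : ℝ)
        simp only [cfC, hb]
        push_cast
        ring
      · show GenContFract.nextDen _ _ _ _ = _
        rw [GenContFract.nextDen, ih.1.2, ih.2.2]
        show _ = ((cfC ω (k+2)).2 : ℝ)
        simp only [cfC, hb]
        push_cast
        ring
  exact fun n => (H n).1

theorem dens_eq_cfC (hirr : Irrational ω) (n : ℕ) :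
    (GenContFract.of ω).dens n = (((cfC ω (n+1)).2 : ℤ) : ℝ) :=
  (cfC_cast hirr (n+1)).2

theorem nums_eq_cfC (hirr : Irrational ω) (n : ℕ) :
    (GenContFract.of ω).nums n = (((cfC ω (n+1)).1 : ℤ) : ℝ) :=
  (cfC_cast hirr (n+1)).1

theorem one_le_dens (hirr : Irrational ω) (n : ℕ) :
    (1 : ℝ) ≤ (GenContFract.of ω).dens n := by
  have h := GenContFract.succ_nth_fib_le_of_nth_den (v := ω) (n := n)
    (Or.inr (not_terminatedAt hirr (n-1)))
  calc (1:ℝ) = ((1:ℕ) : ℝ) := by norm_num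
  _ ≤ ((Nat.fib (n+1) : ℕ) : ℝ) := by
      exact_mod_cast Nat.fib_pos.2 n.succ_pos
  _ ≤ _ := h

/-- signed error `q_n ω - p_n`. -/
noncomputable def sErr (ω : ℝ) (n : ℕ) : ℝ :=
  (GenContFract.of ω).dens n * ω - (GenContFract.of ω).nums n

/-- `η_n = |q_n ω - p_n|` with sign stripped. -/
noncomputable def etaCF (ω : ℝ) (n : ℕ) : ℝ := (-1) ^ n * sErr ω n

theorem sErr_eq (ω : ℝ) (n : ℕ) : sErr ω n = (-1) ^ n * etaCF ω n := by
  rcases Nat.even_or_odd n with he | ho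
  · simp [etaCF, he.neg_one_pow]
  · simp [etaCF, ho.neg_one_pow]

theorem eta_pos (hirr : Irrational ω) (n : ℕ) : 0 < etaCF ω n := by
  have hfr := fr_pos hirr n
  have hfrne : (ifs ω n).fr ≠ 0 := ne_of_gt hfr
  have hsub := GenContFract.sub_convs_eq (stream_eq hirr n)
  simp only [if_neg hfrne] at hsub
  have hB : (GenContFract.of ω).dens n = ((GenContFract.of ω).contsAux (n+1)).b := rfl
  have hBpos : (0:ℝ) < (GenContFract.of ω).dens n :=
    lt_of_lt_of_le one_pos (one_le_dens hirr n)
  have hpB : (0:ℝ) ≤ ((GenContFract.of ω).contsAux n).b :=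
    GenContFract.zero_le_of_contsAux_b
  have hconv : (GenContFract.of ω).convs n
      = (GenContFract.of ω).nums n / (GenContFract.of ω).dens n := rfl
  have hden : (0:ℝ) < (ifs ω n).fr⁻¹ * (GenContFract.of ω).dens n
      + ((GenContFract.of ω).contsAux n).b := by positivity
  have hval : sErr ω n = (-1)^n * ((ifs ω n).fr⁻¹ * (GenContFract.of ω).dens n
      + ((GenContFract.of ω).contsAux n).b)⁻¹ := by
    have : sErr ω n = (GenContFract.of ω).dens n
        * (ω - (GenContFract.of ω).convs n) := by
      rw [hconv, sErr]; field_simp <;> ring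
    rw [this, hsub, ← hB]
    field_simp
  have : etaCF ω n = ((ifs ω n).fr⁻¹ * (GenContFract.of ω).dens n
      + ((GenContFract.of ω).contsAux n).b)⁻¹ := by
    rw [etaCF, hval, ← mul_assoc, ← mul_pow]
    simp
  rw [this]
  positivity

theorem sErr_recurrence (hirr : Irrational ω) (n : ℕ) :
    sErr ω (n+2) = ((ifs ω (n+2)).b : ℝ) * sErr ω (n+1) + sErr ω n := by
  have hn := GenContFract.nums_recurrence (g := GenContFract.of ω)
    (of_s_get hirr (n+1)) rfl rfl
  have hd := GenContFract.dens_recurrence (g := GenContFract.of ω)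
    (of_s_get hirr (n+1)) rfl rfl
  simp only [sErr, hn, hd]
  ring

theorem eta_key (hirr : Irrational ω) (n : ℕ) :
    etaCF ω (n+2) = etaCF ω n - ((ifs ω (n+2)).b : ℝ) * etaCF ω (n+1) := by
  have hrec := sErr_recurrence hirr n
  rw [sErr_eq ω (n+2), sErr_eq ω (n+1), sErr_eq ω n] at hrec
  have hsq : ((-1:ℝ))^n * (-1)^n = 1 := by rw [← mul_pow]; norm_num
  linear_combination ((-1:ℝ)^n) * hrec - (etaCF ω (n+2)
    + ((ifs ω (n+2)).b : ℝ) * etaCF ω (n+1) - etaCF ω n) * hsq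

theorem eta_fib (hirr : Irrational ω) (n : ℕ) :
    etaCF ω (n+1) + etaCF ω (n+2) ≤ etaCF ω n := by
  have key := eta_key hirr n
  have hb : (1:ℝ) ≤ ((ifs ω (n+2)).b : ℝ) := by exact_mod_cast one_le_b hirr (n+1)
  have hpos := eta_pos hirr (n+1)
  nlinarith [hpos, hb]

theorem eta_lt (hirr : Irrational ω) (n : ℕ) : etaCF ω (n+1) < etaCF ω n :=
  lt_of_lt_of_le (by linarith [eta_pos hirr (n+2)] : etaCF ω (n+1)
    < etaCF ω (n+1) + etaCF ω (n+2)) (eta_fib hirr n)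

theorem abs_sErr (hirr : Irrational ω) (n : ℕ) : |sErr ω n| = etaCF ω n := by
  rw [sErr_eq]
  rcases Nat.even_or_odd n with he | ho
  · rw [he.neg_one_pow, one_mul, abs_of_pos (eta_pos hirr n)]
  · rw [ho.neg_one_pow, neg_one_mul, abs_neg, abs_of_pos (eta_pos hirr n)]

theorem eta_le_inv_dens (hirr : Irrational ω) (n : ℕ) :
    etaCF ω n ≤ 1 / (GenContFract.of ω).dens (n+1) := by
  have habs := GenContFract.abs_sub_convs_le (not_terminatedAt hirr n)
  have hBpos : (0:ℝ) < (GenContFract.of ω).dens n :=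
    lt_of_lt_of_le one_pos (one_le_dens hirr n)
  have hB1pos : (0:ℝ) < (GenContFract.of ω).dens (n+1) :=
    lt_of_lt_of_le one_pos (one_le_dens hirr (n+1))
  have h1 : etaCF ω n = |sErr ω n| := (abs_sErr hirr n).symm
  have h2 : |sErr ω n| = (GenContFract.of ω).dens n
      * |ω - (GenContFract.of ω).convs n| := by
    rw [← abs_of_pos hBpos, ← abs_mul]
    congr 1
    have hconv : (GenContFract.of ω).convs n
        = (GenContFract.of ω).nums n / (GenContFract.of ω).dens n := rfl
    rw [hconv, sErr]
    field_simp <;> ring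
  rw [h1, h2]
  calc (GenContFract.of ω).dens n * |ω - (GenContFract.of ω).convs n|
      ≤ (GenContFract.of ω).dens n
        * (1 / ((GenContFract.of ω).dens n * (GenContFract.of ω).dens (n+1))) :=
        mul_le_mul_of_nonneg_left habs hBpos.le
  _ = 1 / (GenContFract.of ω).dens (n+1) := by field_simp

theorem cfC_det (hirr : Irrational ω) (n : ℕ) :
    (cfC ω n).1 * (cfC ω (n+1)).2 - (cfC ω n).2 * (cfC ω (n+1)).1 = (-1)^n := by
  cases n with
  | zero => simp [cfC]
  | succ k =>
  have hd := SimpContFract.determinant (s := SimpContFract.of ω) (n := k)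
    (not_terminatedAt hirr k)
  have hco : ((SimpContFract.of ω : SimpContFract ℝ) : GenContFract ℝ)
      = GenContFract.of ω := rfl
  rw [hco, nums_eq_cfC hirr k, dens_eq_cfC hirr k,
    nums_eq_cfC hirr (k+1), dens_eq_cfC hirr (k+1)] at hd
  exact_mod_cast hd

/-- abbreviation for the integer `q_n` and `p_n`. -/
noncomputable def Qi (ω : ℝ) (n : ℕ) : ℤ := (cfC ω (n+1)).2
noncomputable def Pi' (ω : ℝ) (n : ℕ) : ℤ := (cfC ω (n+1)).1

theorem Qi_cast (hirr : Irrational ω) (n : ℕ) :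
    ((Qi ω n : ℤ) : ℝ) = (GenContFract.of ω).dens n := (dens_eq_cfC hirr n).symm

theorem Pi_cast (hirr : Irrational ω) (n : ℕ) :
    ((Pi' ω n : ℤ) : ℝ) = (GenContFract.of ω).nums n := (nums_eq_cfC hirr n).symm

theorem one_le_Qi (hirr : Irrational ω) (n : ℕ) : 1 ≤ Qi ω n := by
  have := one_le_dens hirr n
  rw [← Qi_cast hirr n] at this
  exact_mod_cast this

theorem Qi_omega_eq (hirr : Irrational ω) (n : ℕ) :
    ((Qi ω n : ℤ) : ℝ) * ω = ((Pi' ω n : ℤ) : ℝ) + sErr ω n := by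
  rw [Qi_cast hirr n, Pi_cast hirr n, sErr]; ring

/-- `p_n q_{n+1} - q_n p_{n+1} = (-1)^(n+1)` -/
theorem Qi_det (hirr : Irrational ω) (n : ℕ) :
    Pi' ω n * Qi ω (n+1) - Qi ω n * Pi' ω (n+1) = (-1)^(n+1) :=
  cfC_det hirr (n+1)

theorem abs_add_of_mul_pos {u w : ℝ} (h : 0 < u * w) : |u + w| = |u| + |w| := by
  rcases mul_pos_iff.1 h with ⟨hu, hw⟩ | ⟨hu, hw⟩
  · rw [abs_of_pos hu, abs_of_pos hw, abs_of_pos (by linarith)]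
  · rw [abs_of_neg hu, abs_of_neg hw, abs_of_neg (by linarith)]
    ring

/-- Best approximation: if `1 ≤ i < q_{n+1}` then `|iω - j| ≥ η_n`. -/
theorem best_approx (hirr : Irrational ω) (n : ℕ) (i : ℕ) (hi : 1 ≤ i)
    (hiq : (i : ℤ) < Qi ω (n+1)) (j : ℤ) : etaCF ω n ≤ |(i : ℝ) * ω - j| := by
  have hdet := Qi_det hirr n
  obtain ⟨x, y, hxq, hxp⟩ : ∃ x y : ℤ, x * Qi ω n + y * Qi ω (n+1) = i ∧
      x * Pi' ω n + y * Pi' ω (n+1) = j := by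
    have hd2 : ((-1:ℤ)^(n+1)) * ((-1)^(n+1)) = 1 := by
      rw [← pow_add]; exact Even.neg_one_pow ⟨n+1, by ring⟩
    refine ⟨-(-1:ℤ)^(n+1) * (Pi' ω (n+1) * i - Qi ω (n+1) * j),
      (-1:ℤ)^(n+1) * (Pi' ω n * i - Qi ω n * j), ?_, ?_⟩
    · have h : -(-1:ℤ)^(n+1) * (Pi' ω (n+1) * i - Qi ω (n+1) * j) * Qi ω n
          + (-1:ℤ)^(n+1) * (Pi' ω n * i - Qi ω n * j) * Qi ω (n+1)
          = (-1:ℤ)^(n+1) * i * (Pi' ω n * Qi ω (n+1) - Qi ω n * Pi' ω (n+1)) := by ring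
      rw [h, hdet]; linear_combination (i:ℤ) * hd2
    · have h : -(-1:ℤ)^(n+1) * (Pi' ω (n+1) * i - Qi ω (n+1) * j) * Pi' ω n
          + (-1:ℤ)^(n+1) * (Pi' ω n * i - Qi ω n * j) * Pi' ω (n+1)
          = (-1:ℤ)^(n+1) * j * (Pi' ω n * Qi ω (n+1) - Qi ω n * Pi' ω (n+1)) := by ring
      rw [h, hdet]; linear_combination j * hd2
  have h1 : (x:ℝ)*(Qi ω n:ℝ) + (y:ℝ)*(Qi ω (n+1):ℝ) = (i:ℝ) := by exact_mod_cast hxq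
  have h2 : (x:ℝ)*(Pi' ω n:ℝ) + (y:ℝ)*(Pi' ω (n+1):ℝ) = (j:ℝ) := by exact_mod_cast hxp
  have e1 := Qi_omega_eq hirr n
  have e2 := Qi_omega_eq hirr (n+1)
  have hsum : (i : ℝ) * ω - j = x * sErr ω n + y * sErr ω (n+1) := by
    linear_combination (x:ℝ) * e1 + (y:ℝ) * e2 - ω * h1 + h2
  have hQn := one_le_Qi hirr n
  have hQn1 := one_le_Qi hirr (n+1)
  have hetan := eta_pos hirr n
  have hetan1 := eta_pos hirr (n+1)
  have habsn := abs_sErr hirr n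
  have habsn1 := abs_sErr hirr (n+1)
  rw [hsum]
  rcases eq_or_ne y 0 with hy0 | hy0
  · have hx0 : x ≠ 0 := by
      intro h0; rw [h0, hy0] at hxq; simp at hxq; omega
    have hxabs : (1:ℝ) ≤ |(x:ℝ)| := by
      have : (1:ℤ) ≤ |x| := Int.one_le_abs hx0
      exact_mod_cast this
    rw [hy0]
    simp only [Int.cast_zero, zero_mul, add_zero, abs_mul, habsn]
    nlinarith
  · rcases eq_or_ne x 0 with hx0 | hx0
    · exfalso
      rw [hx0, zero_mul, zero_add] at hxq
      rcases lt_trichotomy y 0 with hyneg | h0 | hypos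
      · have : y * Qi ω (n+1) < 0 := mul_neg_of_neg_of_pos hyneg (by omega)
        omega
      · omega
      · have : Qi ω (n+1) ≤ y * Qi ω (n+1) :=
          le_mul_of_one_le_left (by omega) (by omega)
        omega
    · rcases lt_trichotomy (x * y) 0 with hxy | hxy | hxy
      · -- opposite signs: the two error terms have the same sign
        have hss : sErr ω n * sErr ω (n+1) = -(etaCF ω n * etaCF ω (n+1)) := by
          rw [sErr_eq ω n, sErr_eq ω (n+1)]
          have hm : (-1:ℝ)^n * (-1)^(n+1) = -1 := by
            rw [pow_succ, ← mul_assoc, ← mul_pow]; norm_num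
          linear_combination (etaCF ω n * etaCF ω (n+1)) * hm
        have hssneg : sErr ω n * sErr ω (n+1) < 0 := by rw [hss]; nlinarith
        have hxyR : ((x:ℝ) * y) < 0 := by exact_mod_cast hxy
        have hprod : 0 < ((x:ℝ) * sErr ω n) * ((y:ℝ) * sErr ω (n+1)) := by
          have h : ((x:ℝ) * sErr ω n) * ((y:ℝ) * sErr ω (n+1))
              = ((x:ℝ) * y) * (sErr ω n * sErr ω (n+1)) := by ring
          rw [h]; exact mul_pos_of_neg_of_neg hxyR hssneg
        rw [abs_add_of_mul_pos hprod, abs_mul, abs_mul, habsn, habsn1]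
        have hxabs : (1:ℝ) ≤ |(x:ℝ)| := by
          have : (1:ℤ) ≤ |x| := Int.one_le_abs hx0
          exact_mod_cast this
        nlinarith [abs_nonneg (y:ℝ)]
      · exact absurd (mul_eq_zero.1 hxy) (by tauto)
      · exfalso
        rcases mul_pos_iff.1 hxy with ⟨hxpos, hypos⟩ | ⟨hxneg, hyneg⟩
        · have hA : Qi ω n ≤ x * Qi ω n :=
            le_mul_of_one_le_left (by omega) (by omega)
          have hB : Qi ω (n+1) ≤ y * Qi ω (n+1) :=
            le_mul_of_one_le_left (by omega) (by omega)
          omega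
        · have hA : x * Qi ω n < 0 := mul_neg_of_neg_of_pos hxneg (by omega)
          have hB : y * Qi ω (n+1) < 0 := mul_neg_of_neg_of_pos hyneg (by omega)
          omega

/-- natural-number version of the denominators. -/
noncomputable def Qn (ω : ℝ) (n : ℕ) : ℕ := (Qi ω n).toNat

theorem Qn_cast (hirr : Irrational ω) (n : ℕ) :
    ((Qn ω n : ℕ) : ℝ) = (GenContFract.of ω).dens n := by
  rw [← Qi_cast hirr n]
  have := one_le_Qi hirr n
  rw [Qn]
  exact_mod_cast Int.toNat_of_nonneg (by omega)

theorem one_le_Qn (hirr : Irrational ω) (n : ℕ) : 1 ≤ Qn ω n := by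
  have := one_le_Qi hirr n; rw [Qn]; omega

theorem Qn_omega_eq (hirr : Irrational ω) (n : ℕ) :
    ((Qn ω n : ℕ) : ℝ) * ω = ((Pi' ω n : ℤ) : ℝ) + sErr ω n := by
  rw [Qn_cast hirr n, ← Qi_cast hirr n]
  exact Qi_omega_eq hirr n

theorem sErr_sign (hirr : Irrational ω) (m : ℕ) :
    (sErr ω m = etaCF ω m ∧ sErr ω (m+1) = -etaCF ω (m+1)) ∨
    (sErr ω m = -etaCF ω m ∧ sErr ω (m+1) = etaCF ω (m+1)) := by
  rcases Nat.even_or_odd m with he | ho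
  · left
    constructor
    · rw [sErr_eq, he.neg_one_pow, one_mul]
    · rw [sErr_eq, pow_succ, he.neg_one_pow, one_mul, neg_one_mul]
  · right
    constructor
    · rw [sErr_eq, ho.neg_one_pow, neg_one_mul]
    · rw [sErr_eq, pow_succ, ho.neg_one_pow]; ring

/-- The covering lemma: every point of the circle is within `η_m` of one of the
first `q_m + q_{m+1}` orbit points. -/
theorem covering (hirr : Irrational ω) (m : ℕ) (u : ℝ) :
    ∃ i : ℕ, 1 ≤ i ∧ i ≤ Qn ω m + Qn ω (m+1) ∧
      ∃ z : ℤ, |(i:ℝ) * ω - u - z| ≤ etaCF ω m := by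
  set N := Qn ω m + Qn ω (m+1) with hN
  set f : ℕ → ℝ := fun i => Int.fract ((i:ℝ) * ω - u) with hf
  have hQm := one_le_Qn hirr m
  have hQm1 := one_le_Qn hirr (m+1)
  have hNmem : (1:ℕ) ∈ Finset.Icc 1 N := Finset.mem_Icc.2 ⟨le_refl 1, by omega⟩
  obtain ⟨i0, hi0F, hmax⟩ := Finset.exists_max_image (Finset.Icc 1 N) f ⟨1, hNmem⟩
  rw [Finset.mem_Icc] at hi0F
  -- shift identities
  have hshift : ∀ (k i : ℕ), f (i + Qn ω k) = Int.fract (f i + sErr ω k) := by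
    intro k i
    have h1 : ((i + Qn ω k : ℕ) : ℝ) * ω - u
        = (((i:ℝ) * ω - u + sErr ω k) + (Pi' ω k : ℤ)) := by
      push_cast
      have := Qn_omega_eq hirr k
      nlinarith [this]
    have h2 : (i:ℝ) * ω - u + sErr ω k
        = ((⌊(i:ℝ) * ω - u⌋ : ℤ) : ℝ) + (f i + sErr ω k) := by
      simp only [hf, Int.fract]; ring
    simp only [hf]
    rw [h1, Int.fract_add_intCast, h2, Int.fract_intCast_add]
  have hshift' : ∀ (k i : ℕ), Qn ω k ≤ i →
      f (i - Qn ω k) = Int.fract (f i - sErr ω k) := by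
    intro k i hki
    have h1 : ((i - Qn ω k : ℕ) : ℝ) * ω - u
        = (((i:ℝ) * ω - u - sErr ω k) + (-(Pi' ω k) : ℤ)) := by
      push_cast [hki]
      have := Qn_omega_eq hirr k
      nlinarith [this]
    have h2 : (i:ℝ) * ω - u - sErr ω k
        = ((⌊(i:ℝ) * ω - u⌋ : ℤ) : ℝ) + (f i - sErr ω k) := by
      simp only [hf, Int.fract]; ring
    simp only [hf]
    rw [h1, Int.fract_add_intCast, h2, Int.fract_intCast_add]
  have hfnonneg : 0 ≤ f i0 := Int.fract_nonneg _
  have hfone : f i0 < 1 := Int.fract_lt_one _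
  have hetam := eta_pos hirr m
  have hetam1 := eta_pos hirr (m+1)
  have hetalt := eta_lt hirr m
  suffices key : 1 - etaCF ω m ≤ f i0 by
    refine ⟨i0, hi0F.1, hi0F.2, ⌊(i0:ℝ) * ω - u⌋ + 1, ?_⟩
    have heq : (i0:ℝ) * ω - u - ((⌊(i0:ℝ) * ω - u⌋ + 1 : ℤ) : ℝ) = f i0 - 1 := by
      push_cast
      simp only [hf, Int.fract]
      ring
    rw [heq, abs_of_nonpos (by linarith)]
    linarith
  by_contra hlt
  push_neg at hlt
  have contra : ∀ i1 : ℕ, i1 ∈ Finset.Icc 1 N → ∀ e : ℝ, 0 < e →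
      f i1 = f i0 + e → False := by
    intro i1 hi1 e he hfi1
    have := hmax i1 hi1
    rw [hfi1] at this
    linarith
  rcases sErr_sign hirr m with ⟨hsm, hsm1⟩ | ⟨hsm, hsm1⟩
  · rcases le_or_gt (i0 + Qn ω m) N with hle | hgt
    · refine contra (i0 + Qn ω m) (Finset.mem_Icc.2 ⟨by omega, hle⟩)
        (etaCF ω m) hetam ?_
      rw [hshift m i0, hsm, Int.fract_eq_self.2 ⟨by linarith, by linarith⟩]
    · refine contra (i0 - Qn ω (m+1)) (Finset.mem_Icc.2 ⟨by omega, by omega⟩)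
        (etaCF ω (m+1)) hetam1 ?_
      rw [hshift' (m+1) i0 (by omega), hsm1, sub_neg_eq_add,
        Int.fract_eq_self.2 ⟨by linarith, by linarith⟩]
  · rcases le_or_gt (i0 + Qn ω (m+1)) N with hle | hgt
    · refine contra (i0 + Qn ω (m+1)) (Finset.mem_Icc.2 ⟨by omega, hle⟩)
        (etaCF ω (m+1)) hetam1 ?_
      rw [hshift (m+1) i0, hsm1, Int.fract_eq_self.2 ⟨by linarith, by linarith⟩]
    · refine contra (i0 - Qn ω m) (Finset.mem_Icc.2 ⟨by omega, by omega⟩)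
        (etaCF ω m) hetam ?_
      rw [hshift' m i0 (by omega), hsm, sub_neg_eq_add,
        Int.fract_eq_self.2 ⟨by linarith, by linarith⟩]

/-- The rotation `x ↦ x + 2πω` on the circle `ℝ/2πℤ`. -/
noncomputable def Trot (ω : ℝ) (x : AddCircle (2 * Real.pi)) : AddCircle (2 * Real.pi) :=
  x + (↑(2 * Real.pi * ω) : AddCircle (2 * Real.pi))

/-- First return (hitting) time of `x` to `S` under `T`. -/
noncomputable def firstHit {α : Type*} (T : α → α) (S : Set α) (x : α) : ℕ :=
  sInf {i : ℕ | 0 < i ∧ T^[i] x ∈ S}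

theorem trot_iterate (ω : ℝ) (x : AddCircle (2 * Real.pi)) (i : ℕ) :
    (Trot ω)^[i] x = x + (((i : ℝ) * (2 * Real.pi * ω) : ℝ) : AddCircle (2 * Real.pi)) := by
  induction i with
  | zero => simp
  | succ k ih =>
    rw [Function.iterate_succ_apply', ih, Trot]
    rw [show ((k+1 : ℕ) : ℝ) * (2 * Real.pi * ω)
      = (k : ℝ) * (2 * Real.pi * ω) + 2 * Real.pi * ω by push_cast; ring]
    rw [AddCircle.coe_add]
    abel

theorem abs_sub_round_le' (t : ℝ) (z : ℤ) : |t - round t| ≤ |t - z| := by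
  rcases eq_or_ne z (round t) with rfl | hz
  · exact le_refl _
  · have h1 : (1:ℝ) ≤ |((round t - z : ℤ) : ℝ)| := by
      have : (1:ℤ) ≤ |round t - z| := Int.one_le_abs (sub_ne_zero.2 (Ne.symm hz))
      exact_mod_cast this
    have h2 := abs_sub_round t
    have h3 : |((round t : ℤ) : ℝ) - z| ≤ |(round t : ℝ) - t| + |t - z| := abs_sub_le _ t _
    have h4 : |(round t : ℝ) - t| = |t - round t| := abs_sub_comm _ _
    push_cast at h1
    linarith

theorem norm_le_of_int {p : ℝ} (hp : 0 < p) (y : ℝ) (z : ℤ) :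
    ‖(y : AddCircle p)‖ ≤ |y - z * p| := by
  rw [AddCircle.norm_eq]
  have e1 : y - (round (p⁻¹ * y) : ℤ) * p = p * (p⁻¹ * y - round (p⁻¹ * y)) := by
    field_simp
  have e2 : y - (z:ℝ) * p = p * (p⁻¹ * y - z) := by field_simp
  rw [e1, e2, abs_mul, abs_mul, abs_of_pos hp]
  exact mul_le_mul_of_nonneg_left (abs_sub_round_le' _ _) hp.le

theorem norm_exists_int {p : ℝ} (y ε : ℝ) (hn : ‖(y : AddCircle p)‖ ≤ ε) :
    ∃ z : ℤ, |y - z * p| ≤ ε :=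
  ⟨round (p⁻¹ * y), by rw [AddCircle.norm_eq] at hn; exact hn⟩

theorem eta_small (hirr : Irrational ω) {ε : ℝ} (hε : 0 < ε) :
    ∃ n : ℕ, etaCF ω n ≤ ε := by
  set K := max 5 ⌈ε⁻¹⌉₊ with hK
  refine ⟨K, ?_⟩
  have h1 := eta_le_inv_dens hirr K
  have h2 : (Nat.fib (K+2) : ℝ) ≤ (GenContFract.of ω).dens (K+1) :=
    GenContFract.succ_nth_fib_le_of_nth_den (Or.inr (not_terminatedAt hirr K))
  have h3 : (K : ℕ) + 2 ≤ Nat.fib (K+2) := Nat.le_fib_self (by omega)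
  have h4 : ε⁻¹ ≤ ((K:ℝ) + 2) := by
    have : (⌈ε⁻¹⌉₊ : ℝ) ≤ (K:ℝ) + 2 := by
      have : ⌈ε⁻¹⌉₊ ≤ K := le_max_right _ _
      exact_mod_cast by omega
    linarith [Nat.le_ceil ε⁻¹]
  have h5 : ε⁻¹ ≤ (GenContFract.of ω).dens (K+1) := by
    calc ε⁻¹ ≤ ((K:ℝ)+2) := h4
    _ ≤ (Nat.fib (K+2) : ℝ) := by exact_mod_cast h3
    _ ≤ _ := h2
  have hεinv : 0 < ε⁻¹ := inv_pos.2 hε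
  calc etaCF ω K ≤ 1 / (GenContFract.of ω).dens (K+1) := h1
  _ ≤ 1 / ε⁻¹ := one_div_le_one_div_of_le hεinv h5
  _ = ε := by field_simp

theorem eta_decay (hirr : Irrational ω) (k : ℕ) :
    34 * etaCF ω (k+8) ≤ etaCF ω k := by
  have h0 := eta_fib hirr k
  have h1 := eta_fib hirr (k+1)
  have h2 := eta_fib hirr (k+2)
  have h3 := eta_fib hirr (k+3)
  have h4 := eta_fib hirr (k+4)
  have h5 := eta_fib hirr (k+5)
  have h6 := eta_fib hirr (k+6)
  have h7 := eta_fib hirr (k+7)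
  have p8 := eta_pos hirr (k+8)
  have p9 := eta_pos hirr (k+9)
  have e2 : k+1+1 = k+2 := rfl
  norm_num at h0 h1 h2 h3 h4 h5 h6 h7 ⊢
  linarith

/-- If `ω` is irrational of bounded type with constant `M` (the continued fraction
denominators satisfy `q_{n+1} < M·q_n`), `I` is an interval (arc) of length `2h` with
`0 < 2h < π/4`, `r` is the minimal first return time to `I` over `x ∈ I` and `r̂` the
maximal first return time to the concentric interval `I/10` over `x ∈ I/10`, then
`r/r̂ ≥ M^{-10}`. -/
theorem stmt8 (ω M : ℝ) (hirr : Irrational ω)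
    (hM : (Real.sqrt 5 + 1) / 2 ≤ M)
    (hbdd : ∀ n : ℕ, (GenContFract.of ω).dens (n + 1) < M * (GenContFract.of ω).dens n)
    (c : AddCircle (2 * Real.pi)) (h : ℝ) (h0 : 0 < 2 * h) (h1 : 2 * h < Real.pi / 4) :
    M ^ (-10 : ℤ) ≤
      ((sInf (firstHit (Trot ω) (Metric.closedBall c h) '' Metric.closedBall c h) : ℕ) : ℝ) /
        ((sSup (firstHit (Trot ω) (Metric.closedBall c (h / 10)) ''
          Metric.closedBall c (h / 10)) : ℕ) : ℝ) := by
  have hπ := Real.pi_pos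
  have hh : 0 < h := by linarith
  have h2π : (0:ℝ) < 2 * Real.pi := by linarith
  have hs5 : (2:ℝ) ≤ Real.sqrt 5 := by
    nlinarith [Real.sq_sqrt (by norm_num : (0:ℝ) ≤ 5), Real.sqrt_nonneg 5]
  have hMpos : (0:ℝ) < M := by linarith
  have hM2 : M + 1 ≤ M ^ 2 := by
    nlinarith [Real.sq_sqrt (by norm_num : (0:ℝ) ≤ 5), Real.sqrt_nonneg 5]
  -- choice of the scale indices n and m
  have hex1 : ∃ k, etaCF ω k ≤ h / Real.pi := eta_small hirr (by positivity)
  set n := Nat.find hex1 with hn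
  have hnspec : etaCF ω n ≤ h / Real.pi := Nat.find_spec hex1
  have hp8 : etaCF ω (n+8) ≤ h / (20 * Real.pi) := by
    have hd := eta_decay hirr n
    have hp := eta_pos hirr (n+8)
    have hA : 34 * (Real.pi * etaCF ω (n+8)) ≤ h := by
      have h34 : 34 * etaCF ω (n+8) ≤ h / Real.pi := le_trans hd hnspec
      have := mul_le_mul_of_nonneg_right h34 hπ.le
      calc 34 * (Real.pi * etaCF ω (n+8)) = 34 * etaCF ω (n+8) * Real.pi := by ring
      _ ≤ (h / Real.pi) * Real.pi := this
      _ = h := by field_simp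
    rw [le_div_iff₀ (by positivity)]
    nlinarith [hA, hp, hπ]
  have hex2 : ∃ k, etaCF ω k ≤ h / (20 * Real.pi) := ⟨n+8, hp8⟩
  set m := Nat.find hex2 with hm
  have hmspec : etaCF ω m ≤ h / (20 * Real.pi) := Nat.find_spec hex2
  have hmle : m ≤ n + 8 := Nat.find_le hp8
  -- denominator size facts
  have hmono : ∀ a b : ℕ, a ≤ b → (GenContFract.of ω).dens a ≤ (GenContFract.of ω).dens b :=
    fun a b hab => monotone_nat_of_le_succ (f := (GenContFract.of ω).dens) (fun k => GenContFract.of_den_mono) hab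
  have hgrow : ∀ j k : ℕ, (GenContFract.of ω).dens (k + j)
      ≤ M ^ j * (GenContFract.of ω).dens k := by
    intro j
    induction j with
    | zero => intro k; simp
    | succ l ih =>
      intro k
      have e : k + (l+1) = (k + l) + 1 := by omega
      rw [e]
      calc (GenContFract.of ω).dens ((k+l)+1) ≤ M * (GenContFract.of ω).dens (k+l) :=
        (hbdd (k+l)).le
      _ ≤ M * (M ^ l * (GenContFract.of ω).dens k) :=
        mul_le_mul_of_nonneg_left (ih k) hMpos.le
      _ = M ^ (l+1) * (GenContFract.of ω).dens k := by ring
  have hdn1 : (1:ℝ) ≤ (GenContFract.of ω).dens n := one_le_dens hirr n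
  have hdm : (GenContFract.of ω).dens m + (GenContFract.of ω).dens (m+1)
      ≤ M ^ 10 * (GenContFract.of ω).dens n := by
    have hA : (GenContFract.of ω).dens m ≤ M^8 * (GenContFract.of ω).dens n :=
      le_trans (hmono m (n+8) hmle) (hgrow 8 n)
    have hB : (GenContFract.of ω).dens (m+1) ≤ M * (GenContFract.of ω).dens m := (hbdd m).le
    have hdm1 : (1:ℝ) ≤ (GenContFract.of ω).dens m := one_le_dens hirr m
    calc (GenContFract.of ω).dens m + (GenContFract.of ω).dens (m+1)
        ≤ (GenContFract.of ω).dens m + M * (GenContFract.of ω).dens m := by linarith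
    _ = (M+1) * (GenContFract.of ω).dens m := by ring
    _ ≤ M^2 * (GenContFract.of ω).dens m := mul_le_mul_of_nonneg_right hM2 (by linarith)
    _ ≤ M^2 * (M^8 * (GenContFract.of ω).dens n) :=
        mul_le_mul_of_nonneg_left hA (by positivity)
    _ = M^10 * (GenContFract.of ω).dens n := by ring
  -- the hitting lemma: from anywhere, within q_m + q_{m+1} steps we enter the small ball
  have hit : ∀ x : AddCircle (2 * Real.pi), ∃ i : ℕ, 0 < i ∧ i ≤ Qn ω m + Qn ω (m+1) ∧
      (Trot ω)^[i] x ∈ Metric.closedBall c (h/10) := by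
    intro x
    obtain ⟨w, hw⟩ := QuotientAddGroup.mk_surjective (c - x)
    obtain ⟨i, hi1, hiN, z, hz⟩ := covering hirr m (w / (2 * Real.pi))
    refine ⟨i, hi1, hiN, ?_⟩
    rw [Metric.mem_closedBall, trot_iterate, dist_eq_norm]
    have e1 : x + (((i:ℝ) * (2 * Real.pi * ω) : ℝ) : AddCircle (2*Real.pi)) - c
        = ((((i:ℝ) * (2 * Real.pi * ω) - w : ℝ)) : AddCircle (2*Real.pi)) := by
      rw [AddCircle.coe_sub, hw]
      abel
    rw [e1]
    refine le_trans (norm_le_of_int h2π ((i:ℝ) * (2 * Real.pi * ω) - w) z) ?_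
    have e0 : ((i:ℝ) * (2 * Real.pi * ω) - w) - (z:ℝ) * (2*Real.pi)
        = (2*Real.pi) * ((i:ℝ) * ω - w/(2*Real.pi) - z) := by
      field_simp
    rw [e0, abs_mul, abs_of_pos h2π]
    calc (2*Real.pi) * |(i:ℝ) * ω - w/(2*Real.pi) - z|
        ≤ (2*Real.pi) * (h/(20*Real.pi)) :=
          mul_le_mul_of_nonneg_left (le_trans hz hmspec) h2π.le
    _ = h/10 := by field_simp; ring
  -- return sets are nonempty
  have hsub : Metric.closedBall c (h/10) ⊆ Metric.closedBall c h :=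
    Metric.closedBall_subset_closedBall (by linarith)
  have hne : ∀ x : AddCircle (2 * Real.pi),
      {i : ℕ | 0 < i ∧ (Trot ω)^[i] x ∈ Metric.closedBall c h}.Nonempty := by
    intro x
    obtain ⟨i, hi1, _, hmem⟩ := hit x
    exact ⟨i, hi1, hsub hmem⟩
  have hnes : ∀ x : AddCircle (2 * Real.pi),
      {i : ℕ | 0 < i ∧ (Trot ω)^[i] x ∈ Metric.closedBall c (h/10)}.Nonempty := by
    intro x
    obtain ⟨i, hi1, _, hmem⟩ := hit x
    exact ⟨i, hi1, hmem⟩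
  -- lower bound for the numerator
  have hQnn : (1:ℕ) ≤ Qn ω n := one_le_Qn hirr n
  have hnum : ∀ b ∈ firstHit (Trot ω) (Metric.closedBall c h) '' Metric.closedBall c h,
      Qn ω n ≤ b := by
    rintro b ⟨x, hx, rfl⟩
    have hSne := hne x
    have hmem := Nat.sInf_mem hSne
    obtain ⟨hi0pos, hi0mem⟩ := hmem
    set i0 := sInf {i : ℕ | 0 < i ∧ (Trot ω)^[i] x ∈ Metric.closedBall c h} with hi0
    -- distance estimate
    have hdist : dist ((Trot ω)^[i0] x) x ≤ 2 * h := by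
      calc dist ((Trot ω)^[i0] x) x ≤ dist ((Trot ω)^[i0] x) c + dist c x :=
        dist_triangle _ _ _
      _ ≤ h + h := add_le_add (Metric.mem_closedBall.1 hi0mem)
        (by rw [dist_comm]; exact Metric.mem_closedBall.1 hx)
      _ = 2 * h := by ring
    have hnorm : ‖(((i0:ℝ) * (2 * Real.pi * ω) : ℝ) : AddCircle (2*Real.pi))‖ ≤ 2*h := by
      rw [trot_iterate] at hdist
      rw [dist_eq_norm] at hdist
      have e : x + (((i0:ℝ) * (2 * Real.pi * ω) : ℝ) : AddCircle (2*Real.pi)) - x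
          = (((i0:ℝ) * (2 * Real.pi * ω) : ℝ) : AddCircle (2*Real.pi)) := by abel
      rwa [e] at hdist
    obtain ⟨z, hz⟩ := norm_exists_int _ _ hnorm
    have hz' : |(i0:ℝ) * ω - z| ≤ h / Real.pi := by
      have e0 : ((i0:ℝ) * (2 * Real.pi * ω)) - (z:ℝ) * (2*Real.pi)
          = (2*Real.pi) * ((i0:ℝ) * ω - z) := by ring
      rw [e0, abs_mul, abs_of_pos h2π] at hz
      rw [le_div_iff₀ hπ]
      nlinarith [hz]
    -- best approximation forces i0 ≥ q_n
    have hq : Qn ω n ≤ i0 := by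
      by_contra hcon
      push_neg at hcon
      rcases Nat.eq_zero_or_pos n with hn0 | hnpos
      · rw [hn0] at hcon
        have : Qn ω 0 = 1 := by
          simp [Qn, Qi, cfC]
        omega
      · obtain ⟨k, hk⟩ : ∃ k, n = k + 1 := ⟨n - 1, by omega⟩
        rw [hk] at hcon
        have hik : (i0 : ℤ) < Qi ω (k+1) := by
          have : (i0 : ℤ) < (Qn ω (k+1) : ℤ) := by exact_mod_cast hcon
          rwa [Qn, Int.toNat_of_nonneg (by linarith [one_le_Qi hirr (k+1)] : (0:ℤ) ≤ Qi ω (k+1))] at this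
        have hba := best_approx hirr k i0 hi0pos hik z
        have hkmin : ¬ (etaCF ω k ≤ h / Real.pi) := Nat.find_min hex1 (by omega)
        exact hkmin (le_trans hba hz')
    exact hq
  -- the numerator sInf
  have himgne : (firstHit (Trot ω) (Metric.closedBall c h) '' Metric.closedBall c h).Nonempty :=
    ⟨firstHit (Trot ω) (Metric.closedBall c h) c,
      Set.mem_image_of_mem _ (Metric.mem_closedBall_self hh.le)⟩
  have hRlow : Qn ω n ≤ sInf (firstHit (Trot ω) (Metric.closedBall c h) '' Metric.closedBall c h) :=
    le_csInf himgne hnum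
  -- the denominator sSup
  set Bs := Metric.closedBall c (h/10) with hBs
  have hub : ∀ b ∈ firstHit (Trot ω) Bs '' Bs, b ≤ Qn ω m + Qn ω (m+1) := by
    rintro b ⟨x, hx, rfl⟩
    obtain ⟨i, hi1, hiN, hmem⟩ := hit x
    exact le_trans (Nat.sInf_le ⟨hi1, hmem⟩) hiN
  have himgnes : (firstHit (Trot ω) Bs '' Bs).Nonempty :=
    ⟨firstHit (Trot ω) Bs c, Set.mem_image_of_mem _ (Metric.mem_closedBall_self (by positivity))⟩
  have hSup_le : sSup (firstHit (Trot ω) Bs '' Bs) ≤ Qn ω m + Qn ω (m+1) :=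
    csSup_le himgnes hub
  have hSup_ge : 1 ≤ sSup (firstHit (Trot ω) Bs '' Bs) := by
    have hfc : 1 ≤ firstHit (Trot ω) Bs c := by
      have := Nat.sInf_mem (hnes c)
      exact this.1
    exact le_trans hfc (le_csSup ⟨Qn ω m + Qn ω (m+1), hub⟩
      (Set.mem_image_of_mem _ (Metric.mem_closedBall_self (by positivity))))
  -- final arithmetic
  set R := sInf (firstHit (Trot ω) (Metric.closedBall c h) '' Metric.closedBall c h) with hR
  set S := sSup (firstHit (Trot ω) Bs '' Bs) with hS
  have hSpos : (0:ℝ) < (S:ℝ) := by exact_mod_cast hSup_ge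
  have hRge : (GenContFract.of ω).dens n ≤ (R:ℝ) := by
    have h1' : ((Qn ω n : ℕ):ℝ) ≤ (R:ℝ) := by exact_mod_cast hRlow
    rwa [Qn_cast hirr n] at h1'
  have hSle : (S:ℝ) ≤ M^10 * (GenContFract.of ω).dens n := by
    have h1' : (S:ℝ) ≤ ((Qn ω m + Qn ω (m+1) : ℕ):ℝ) := by exact_mod_cast hSup_le
    have h2' : ((Qn ω m + Qn ω (m+1) : ℕ):ℝ)
        = (GenContFract.of ω).dens m + (GenContFract.of ω).dens (m+1) := by
      push_cast
      rw [Qn_cast hirr m, Qn_cast hirr (m+1)]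
    rw [h2'] at h1'
    linarith
  rw [le_div_iff₀ hSpos]
  have hzpow : M ^ (-10:ℤ) = (M^(10:ℕ))⁻¹ := by
    rw [zpow_neg]
    norm_cast
  rw [hzpow]
  have hMp : (0:ℝ) < M^(10:ℕ) := by positivity
  calc (M^(10:ℕ))⁻¹ * (S:ℝ) ≤ (M^(10:ℕ))⁻¹ * (M^10 * (GenContFract.of ω).dens n) :=
        mul_le_mul_of_nonneg_left hSle (by positivity)
    _ = (GenContFract.of ω).dens n := by field_simp
    _ ≤ (R:ℝ) := hRge
end

section
/- Let ψ be the flat function ψ(x) = e^{-1/x²} for x > 0, ψ(x) = 0 for x ≤ 0. Then for every r ≥ 1 and every x ∈ ℝ, |ψ^{(r)}(x)| ≤ (2r)^{6r}. -/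
noncomputable def psi (x : ℝ) : ℝ := if 0 < x then Real.exp (-1 / x ^ 2) else 0

open Polynomial Filter Set Topology

noncomputable def qpoly : ℕ → Polynomial ℝ
  | 0 => 1
  | n + 1 => (C (-1) * derivative (qpoly n)) * X ^ 2 + (C 2 * qpoly n) * X ^ 3

lemma qpoly_succ (n : ℕ) :
    qpoly (n + 1) = (C (-1) * derivative (qpoly n)) * X ^ 2 + (C 2 * qpoly n) * X ^ 3 := rfl

lemma qpoly_coeff_eq_zero : ∀ n i, 3 * n < i → (qpoly n).coeff i = 0 := by
  intro n
  induction n with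
  | zero =>
    intro i hi
    simp only [qpoly, coeff_one]
    rw [if_neg (by omega)]
  | succ n ih =>
    intro i hi
    rw [qpoly_succ, coeff_add, coeff_mul_X_pow', coeff_mul_X_pow']
    rw [coeff_C_mul, coeff_C_mul, coeff_derivative]
    have h1 : (qpoly n).coeff (i - 2 + 1) = 0 := ih _ (by omega)
    have h2 : (qpoly n).coeff (i - 3) = 0 := ih _ (by omega)
    simp [h1, h2]

lemma qpoly_natDegree_le (n : ℕ) : (qpoly n).natDegree ≤ 3 * n :=
  natDegree_le_iff_coeff_eq_zero.mpr (qpoly_coeff_eq_zero n)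

noncomputable def Abd (n : ℕ) : ℝ := ((3 * n + 1 : ℕ) : ℝ) ^ n

lemma Abd_nonneg (n : ℕ) : 0 ≤ Abd n := pow_nonneg (Nat.cast_nonneg _) _

lemma qpoly_coeff_bound : ∀ n i, |(qpoly n).coeff i| ≤ Abd n := by
  intro n
  induction n with
  | zero =>
    intro i
    simp only [qpoly, coeff_one, Abd]
    rcases eq_or_ne i 0 with h | h <;> simp [h]
  | succ n ih =>
    intro i
    rw [qpoly_succ, coeff_add, coeff_mul_X_pow', coeff_mul_X_pow', coeff_C_mul, coeff_C_mul,
      coeff_derivative]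
    have hA := Abd_nonneg n
    have key1 : |(if 2 ≤ i then (-1 : ℝ) * ((qpoly n).coeff (i - 2 + 1) * (((i - 2 : ℕ) : ℝ) + 1)) else 0)|
        ≤ 3 * n * Abd n := by
      split
      · rw [neg_one_mul, abs_neg, abs_mul]
        by_cases hc : (qpoly n).coeff (i - 2 + 1) = 0
        · simp [hc]
          positivity
        · have hle : i - 2 + 1 ≤ 3 * n := by
            by_contra hgt
            exact hc (qpoly_coeff_eq_zero n _ (by omega))
          have hm : |((i - 2 : ℕ) : ℝ) + 1| ≤ (3 * n : ℝ) := by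
            rw [abs_of_nonneg (by positivity)]
            have h3 : ((i - 2 : ℕ) : ℝ) + 1 = ((i - 2 + 1 : ℕ) : ℝ) := by push_cast; ring
            rw [h3]
            exact_mod_cast hle
          calc |(qpoly n).coeff (i - 2 + 1)| * |((i - 2 : ℕ) : ℝ) + 1|
              ≤ Abd n * (3 * n) := mul_le_mul (ih _) hm (abs_nonneg _) hA
            _ = 3 * n * Abd n := by ring
      · simp
        positivity
    have key2 : |(if 3 ≤ i then (2 : ℝ) * (qpoly n).coeff (i - 3) else 0)| ≤ 2 * Abd n := by
      split
      · rw [abs_mul, abs_two]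
        exact mul_le_mul_of_nonneg_left (ih _) (by norm_num)
      · simp
        positivity
    calc |_ + _| ≤ _ + _ := abs_add_le _ _
      _ ≤ 3 * n * Abd n + 2 * Abd n := add_le_add key1 key2
      _ ≤ Abd (n + 1) := by
        have h1 : ((3 * n + 1 : ℕ) : ℝ) ≤ ((3 * (n + 1) + 1 : ℕ) : ℝ) := by
          exact_mod_cast (by omega : 3 * n + 1 ≤ 3 * (n + 1) + 1)
        have h2 : Abd n ≤ ((3 * (n + 1) + 1 : ℕ) : ℝ) ^ n :=
          pow_le_pow_left₀ (Nat.cast_nonneg _) h1 n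
        calc 3 * n * Abd n + 2 * Abd n = ((3 * n + 2 : ℕ) : ℝ) * Abd n := by push_cast; ring
          _ ≤ ((3 * (n + 1) + 1 : ℕ) : ℝ) * ((3 * (n + 1) + 1 : ℕ) : ℝ) ^ n :=
            mul_le_mul (by exact_mod_cast (by omega : 3 * n + 2 ≤ 3 * (n + 1) + 1)) h2
              (Abd_nonneg n) (Nat.cast_nonneg _)
          _ = Abd (n + 1) := by rw [Abd, pow_succ]; ring

lemma qpoly_eval_bound (n : ℕ) {y : ℝ} (hy : 0 ≤ y) :
    |(qpoly n).eval y| ≤ (3 * n + 1) * Abd n * (max 1 y) ^ (3 * n) := by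
  rw [eval_eq_sum_range' (Nat.lt_succ_of_le (qpoly_natDegree_le n))]
  have hmax : (0:ℝ) ≤ max 1 y := le_max_of_le_left zero_le_one
  calc |∑ i ∈ Finset.range (3 * n + 1), (qpoly n).coeff i * y ^ i|
      ≤ ∑ i ∈ Finset.range (3 * n + 1), |(qpoly n).coeff i * y ^ i| :=
        Finset.abs_sum_le_sum_abs _ _
    _ ≤ ∑ i ∈ Finset.range (3 * n + 1), Abd n * (max 1 y) ^ (3 * n) := by
        apply Finset.sum_le_sum
        intro i hi
        rw [abs_mul, abs_pow, abs_of_nonneg hy]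
        apply mul_le_mul (qpoly_coeff_bound n i) _ (by positivity) (Abd_nonneg n)
        calc y ^ i ≤ (max 1 y) ^ i := pow_le_pow_left₀ hy (le_max_right 1 y) i
          _ ≤ (max 1 y) ^ (3 * n) :=
            pow_le_pow_right₀ (le_max_left 1 y)
              (by simpa using Nat.lt_succ_iff.mp (Finset.mem_range.mp hi))
    _ = (3 * n + 1) * Abd n * (max 1 y) ^ (3 * n) := by
        rw [Finset.sum_const, Finset.card_range]
        push_cast
        ring

noncomputable def Fq (n : ℕ) (x : ℝ) : ℝ := (qpoly n).eval x⁻¹ * Real.exp (-(x⁻¹ ^ 2))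

lemma Fq_hasDerivAt (n : ℕ) {x : ℝ} (hx : x ≠ 0) : HasDerivAt (Fq n) (Fq (n + 1) x) x := by
  have h1 : HasDerivAt (fun y : ℝ => y⁻¹) (-(x ^ 2)⁻¹) x := hasDerivAt_inv hx
  have h2 : HasDerivAt (fun y : ℝ => (qpoly n).eval y⁻¹)
      ((derivative (qpoly n)).eval x⁻¹ * -(x ^ 2)⁻¹) x :=
    ((qpoly n).hasDerivAt x⁻¹).comp x h1
  have h3 : HasDerivAt (fun y : ℝ => -(y⁻¹ ^ 2)) (-((2:ℕ) * x⁻¹ ^ 1 * -(x ^ 2)⁻¹)) x :=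
    (h1.pow 2).neg
  have h4 := h3.exp
  have h5 := h2.mul h4
  refine h5.congr_deriv ?_
  symm
  rw [Fq, qpoly_succ]
  simp only [eval_add, eval_mul, eval_pow, eval_X, eval_C]
  field_simp
  ring

lemma psi_eqOn : EqOn psi (Fq 0) (Ioi 0) := by
  intro x hx
  have hx' : (0:ℝ) < x := hx
  simp only [psi, Fq, qpoly, if_pos hx', eval_one, one_mul]
  congr 1
  field_simp

lemma iteratedDeriv_psi_eqOn (n : ℕ) : EqOn (iteratedDeriv n psi) (Fq n) (Ioi 0) := by
  induction n with
  | zero => simpa [iteratedDeriv_zero] using psi_eqOn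
  | succ n ih =>
    intro x hx
    rw [iteratedDeriv_succ]
    have hev : iteratedDeriv n psi =ᶠ[𝓝 x] Fq n := by
      filter_upwards [isOpen_Ioi.mem_nhds hx] with y hy using ih hy
    rw [hev.deriv_eq]
    exact (Fq_hasDerivAt n (ne_of_gt hx)).deriv

lemma iteratedDeriv_psi_neg (n : ℕ) {x : ℝ} (hx : x < 0) : iteratedDeriv n psi x = 0 := by
  have hev : psi =ᶠ[𝓝 x] (fun _ => (0:ℝ)) := by
    filter_upwards [isOpen_Iio.mem_nhds (show x ∈ Iio 0 from hx)] with y hy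
    simp [psi, not_lt_of_gt (show y < 0 from hy)]
  rw [hev.iteratedDeriv_eq]
  simp [iteratedDeriv_eq_iteratedFDeriv, iteratedFDeriv_zero_fun]

lemma iteratedDeriv_psi_zero (n : ℕ) : iteratedDeriv n psi 0 = 0 := by
  induction n with
  | zero => simp [iteratedDeriv_zero, psi]
  | succ n ih =>
    rw [iteratedDeriv_succ]
    set f := iteratedDeriv n psi with hf
    by_cases hd : DifferentiableAt ℝ f 0
    · have hf0 : f 0 = 0 := ih
      have h3 : HasDerivWithinAt f (deriv f 0) (Iio 0) 0 := hd.hasDerivAt.hasDerivWithinAt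
      have h4 : HasDerivWithinAt (fun _ : ℝ => (0:ℝ)) (deriv f 0) (Iio 0) 0 :=
        h3.congr (fun y hy => (iteratedDeriv_psi_neg n hy).symm) hf0.symm
      have h5 : HasDerivWithinAt (fun _ : ℝ => (0:ℝ)) 0 (Iio 0) 0 :=
        (hasDerivAt_const 0 (0:ℝ)).hasDerivWithinAt
      have := h4.derivWithin (uniqueDiffWithinAt_Iio 0)
      rw [← this, h5.derivWithin (uniqueDiffWithinAt_Iio 0)]
    · exact deriv_zero_of_not_differentiableAt hd

/-- For every `r ≥ 1` and all `x ∈ ℝ`, `|ψ^{(r)}(x)| ≤ (2r)^{6r}`. -/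
theorem stmt12 (r : ℕ) (hr : 1 ≤ r) (x : ℝ) :
    |iteratedDeriv r psi x| ≤ ((2 * r : ℕ) : ℝ) ^ (6 * r) := by
  have hbound_pos : (0:ℝ) ≤ ((2 * r : ℕ) : ℝ) ^ (6 * r) := pow_nonneg (Nat.cast_nonneg _) _
  rcases lt_trichotomy x 0 with hx | hx | hx
  · rw [iteratedDeriv_psi_neg r hx]
    simpa using hbound_pos
  · rw [hx, iteratedDeriv_psi_zero r]
    simpa using hbound_pos
  · -- main case x > 0
    rw [iteratedDeriv_psi_eqOn r hx]
    have hx0 : x ≠ 0 := ne_of_gt hx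
    have hinv : (0:ℝ) ≤ x⁻¹ := le_of_lt (inv_pos.mpr hx)
    have hfac1 : (1:ℝ) ≤ ((2*r).factorial : ℝ) := Nat.one_le_cast.mpr (2*r).factorial_pos
    have hstep1 : |Fq r x| ≤ (3 * r + 1) * Abd r * (max 1 x⁻¹) ^ (3 * r)
        * Real.exp (-(x⁻¹ ^ 2)) := by
      rw [Fq, abs_mul, abs_of_pos (Real.exp_pos _)]
      exact mul_le_mul_of_nonneg_right (qpoly_eval_bound r hinv) (le_of_lt (Real.exp_pos _))
    have hstep2 : (max 1 x⁻¹) ^ (3 * r) * Real.exp (-(x⁻¹ ^ 2)) ≤ ((2*r).factorial : ℝ) := by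
      rcases le_or_gt x⁻¹ 1 with h1 | h1
      · rw [max_eq_left h1, one_pow, one_mul]
        calc Real.exp (-(x⁻¹ ^ 2)) ≤ 1 := Real.exp_le_one_iff.mpr (neg_nonpos.mpr (by positivity))
          _ ≤ _ := hfac1
      · rw [max_eq_right (le_of_lt h1)]
        have hu : (0:ℝ) < x⁻¹ ^ 2 := by positivity
        have hexp : Real.exp (-(x⁻¹ ^ 2)) ≤ ((2*r).factorial : ℝ) / (x⁻¹ ^ 2) ^ (2 * r) := by
          rw [Real.exp_neg]
          rw [inv_le_iff_one_le_mul₀ (Real.exp_pos _), div_mul_eq_mul_div,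
            le_div_iff₀ (by positivity)]
          have h := Real.pow_div_factorial_le_exp (x := x⁻¹ ^ 2) (le_of_lt hu) (2 * r)
          rw [div_le_iff₀ (by positivity)] at h
          linarith [h]
        have hxle1 : x ≤ 1 := by
          rw [← inv_inv x]
          exact inv_le_one_of_one_le₀ (le_of_lt h1)
        calc x⁻¹ ^ (3 * r) * Real.exp (-(x⁻¹ ^ 2))
            ≤ x⁻¹ ^ (3 * r) * (((2*r).factorial : ℝ) / (x⁻¹ ^ 2) ^ (2 * r)) :=
              mul_le_mul_of_nonneg_left hexp (by positivity)
          _ = ((2*r).factorial : ℝ) * x ^ r := by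
              simp only [inv_pow]
              field_simp
              ring
          _ ≤ ((2*r).factorial : ℝ) * 1 :=
              mul_le_mul_of_nonneg_left (pow_le_one₀ (le_of_lt hx) hxle1) (by positivity)
          _ = _ := mul_one _
    have hr1 : (1:ℝ) ≤ (r:ℝ) := by exact_mod_cast hr
    have hstep3 : (3 * (r:ℝ) + 1) * Abd r * ((2*r).factorial : ℝ)
        ≤ ((2 * r : ℕ) : ℝ) ^ (6 * r) := by
      have hcast : ((2 * r : ℕ) : ℝ) = 2 * (r:ℝ) := by push_cast; ring
      rw [hcast]
      have h31 : (3 * (r:ℝ) + 1) ≤ (2*(r:ℝ))^2 := by nlinarith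
      have hAbd : Abd r ≤ (2*(r:ℝ))^(2*r) := by
        rw [Abd]
        calc ((3*r+1:ℕ):ℝ)^r ≤ ((2*(r:ℝ))^2)^r :=
              pow_le_pow_left₀ (Nat.cast_nonneg _) (by push_cast; nlinarith) r
          _ = (2*(r:ℝ))^(2*r) := by rw [← pow_mul]
      have hfac : ((2*r).factorial : ℝ) ≤ (2*(r:ℝ))^(2*r) := by
        calc ((2*r).factorial : ℝ) ≤ (((2*r)^(2*r) : ℕ) : ℝ) :=
              Nat.cast_le.mpr (Nat.factorial_le_pow _)
          _ = (2*(r:ℝ))^(2*r) := by push_cast; ring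
      have h2r : (1:ℝ) ≤ 2*(r:ℝ) := by linarith
      calc (3*(r:ℝ)+1) * Abd r * ((2*r).factorial : ℝ)
          ≤ (2*(r:ℝ))^2 * (2*(r:ℝ))^(2*r) * (2*(r:ℝ))^(2*r) :=
            mul_le_mul (mul_le_mul h31 hAbd (Abd_nonneg r) (by positivity)) hfac
              (by positivity) (by positivity)
        _ = (2*(r:ℝ))^(2+2*r+2*r) := by rw [pow_add, pow_add]
        _ ≤ (2*(r:ℝ))^(6*r) := pow_le_pow_right₀ h2r (by omega)
    calc |Fq r x| ≤ (3 * r + 1) * Abd r * ((max 1 x⁻¹) ^ (3 * r) * Real.exp (-(x⁻¹ ^ 2))) := by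
          rw [← mul_assoc]; exact hstep1
      _ ≤ (3 * r + 1) * Abd r * ((2*r).factorial : ℝ) :=
          mul_le_mul_of_nonneg_left hstep2 (mul_nonneg (by positivity) (Abd_nonneg r))
      _ ≤ _ := hstep3
end

section
/- Fix 0 < a < 1/10 and c ∈ ℝ, and let φ₀(x) = sgn(x - c)·exp(-1/|x-c|^a) for x ≠ c, φ₀(c) = 0. Then for every integer n with q := q_n ≥ some threshold depending on a, every r with 0 ≤ r ≤ ⌊q^a⌋, and every x with |x - c| ≤ 1/q², it holds that |φ₀^{(r)}(x)| ≤ exp(-q^{2a}/4). -/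
/-- The flat function `φ₀(x) = sgn(x-c)·e^{-1/|x-c|^a}` (with `φ₀(c) = 0`). -/
noncomputable def phi0 (a c : ℝ) (x : ℝ) : ℝ :=
  Real.sign (x - c) * Real.exp (-1 / |x - c| ^ a)

namespace Stmt13

open Real Filter Topology Set

noncomputable def term (a : ℝ) (pe : ℝ × ℝ) (x : ℝ) : ℝ :=
  pe.1 * x ^ (-pe.2) * Real.exp (-x ^ (-a))

def step (a : ℝ) (L : List (ℝ × ℝ)) : List (ℝ × ℝ) :=
  L.flatMap fun pe => [(-pe.1 * pe.2, pe.2 + 1), (pe.1 * a, pe.2 + a + 1)]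

def LL (a : ℝ) : ℕ → List (ℝ × ℝ)
  | 0 => [(1, 0)]
  | r + 1 => step a (LL a r)

noncomputable def T (a : ℝ) (L : List (ℝ × ℝ)) (x : ℝ) : ℝ :=
  (L.map fun pe => term a pe x).sum

noncomputable def Sb (L : List (ℝ × ℝ)) : ℝ := (L.map fun pe => |pe.1|).sum

lemma term_hasDerivAt (a : ℝ) (pe : ℝ × ℝ) {x : ℝ} (hx : 0 < x) :
    HasDerivAt (fun y => term a pe y)
      (term a (-pe.1 * pe.2, pe.2 + 1) x + term a (pe.1 * a, pe.2 + a + 1) x) x := by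
  obtain ⟨p, e⟩ := pe
  have hx0 : x ≠ 0 := hx.ne'
  have h1 : HasDerivAt (fun y : ℝ => y ^ (-e)) (-e * x ^ (-e - 1)) x :=
    Real.hasDerivAt_rpow_const (Or.inl hx0)
  have h2 : HasDerivAt (fun y : ℝ => y ^ (-a)) (-a * x ^ (-a - 1)) x :=
    Real.hasDerivAt_rpow_const (Or.inl hx0)
  have h3 : HasDerivAt (fun y : ℝ => Real.exp (-y ^ (-a)))
      (Real.exp (-x ^ (-a)) * (a * x ^ (-a - 1))) x := by
    have := h2.neg.exp
    convert this using 1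
    · rfl
    · simp only [Pi.neg_apply]; ring
  have h4 : HasDerivAt (fun y => p * y ^ (-e) * Real.exp (-y ^ (-a))) _ x :=
    (h1.const_mul p).mul h3
  convert h4 using 1
  · simp only [term]
  simp only [term]
  rw [show (-(e + 1)) = -e - 1 by ring, show (-(e + a + 1)) = (-e) + (-a - 1) by ring,
    Real.rpow_add hx]
  ring

lemma T_nil (a : ℝ) : T a ([] : List (ℝ × ℝ)) = fun _ => (0 : ℝ) := by
  funext y; simp [T]

lemma T_cons (a : ℝ) (pe : ℝ × ℝ) (L : List (ℝ × ℝ)) :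
    T a (pe :: L) = fun y => term a pe y + T a L y := by
  funext y; simp [T]

lemma step_cons (a : ℝ) (pe : ℝ × ℝ) (L : List (ℝ × ℝ)) :
    step a (pe :: L) =
      (-pe.1 * pe.2, pe.2 + 1) :: (pe.1 * a, pe.2 + a + 1) :: step a L := by
  simp [step]

lemma T_hasDerivAt (a : ℝ) (L : List (ℝ × ℝ)) {x : ℝ} (hx : 0 < x) :
    HasDerivAt (T a L) (T a (step a L) x) x := by
  induction L with
  | nil =>
    rw [T_nil]
    have : T a (step a []) x = 0 := by simp [T, step]
    rw [this]
    exact hasDerivAt_const x 0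
  | cons pe L ih =>
    rw [T_cons]
    have h := (term_hasDerivAt a pe hx).add ih
    have : T a (step a (pe :: L)) x
        = (term a (-pe.1 * pe.2, pe.2 + 1) x + term a (pe.1 * a, pe.2 + a + 1) x)
          + T a (step a L) x := by
      rw [step_cons, T_cons, T_cons]
      ring
    rw [this]
    exact h

lemma iteratedDeriv_phi0_pos (a : ℝ) (r : ℕ) :
    ∀ x : ℝ, 0 < x → iteratedDeriv r (phi0 a 0) x = T a (LL a r) x := by
  induction r with
  | zero =>
    intro x hx
    simp only [iteratedDeriv_zero]
    simp [phi0, LL, T, term, Real.sign_of_pos hx, abs_of_pos hx, Real.rpow_neg hx.le,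
      neg_div, one_div]
  | succ r ih =>
    intro x hx
    have hev : iteratedDeriv r (phi0 a 0) =ᶠ[𝓝 x] T a (LL a r) := by
      filter_upwards [Ioi_mem_nhds hx] with y hy using ih y hy
    rw [iteratedDeriv_succ, hev.deriv_eq, (T_hasDerivAt a (LL a r) hx).deriv]
    rfl

lemma phi0_neg (a : ℝ) (x : ℝ) : phi0 a 0 (-x) = -phi0 a 0 x := by
  simp [phi0, Real.sign_neg]

lemma abs_iteratedDeriv_neg (a : ℝ) (r : ℕ) (x : ℝ) :
    |iteratedDeriv r (phi0 a 0) (-x)| = |iteratedDeriv r (phi0 a 0) x| := by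
  have h : (fun y => phi0 a 0 (-y)) = fun y => -phi0 a 0 y := funext fun y => phi0_neg a y
  have h2 := iteratedDeriv_comp_neg r (phi0 a 0) x
  rw [h, iteratedDeriv_fun_neg] at h2
  have h3 : ((-1 : ℝ)) ^ r • iteratedDeriv r (phi0 a 0) (-x)
      = -(iteratedDeriv r (phi0 a 0) x) := h2.symm
  have := congrArg abs h3
  rwa [abs_neg, smul_eq_mul, abs_mul, abs_pow, abs_neg, abs_one, one_pow, one_mul] at this

lemma Sb_nonneg (L : List (ℝ × ℝ)) : 0 ≤ Sb L := by
  apply List.sum_nonneg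
  intro y hy
  simp only [List.mem_map] at hy
  obtain ⟨pe, _, rfl⟩ := hy
  exact abs_nonneg _

lemma Sb_cons (pe : ℝ × ℝ) (L : List (ℝ × ℝ)) : Sb (pe :: L) = |pe.1| + Sb L := by
  simp [Sb]

lemma LL_exp (a : ℝ) (ha0 : 0 ≤ a) (ha1 : a ≤ 1) (r : ℕ) :
    ∀ pe ∈ LL a r, 0 ≤ pe.2 ∧ pe.2 ≤ 2 * (r : ℝ) := by
  induction r with
  | zero =>
    intro pe h
    simp only [LL, List.mem_singleton] at h
    subst h
    norm_num
  | succ r ih =>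
    intro pe h
    simp only [LL, step, List.mem_flatMap, List.mem_cons, List.mem_singleton,
      List.not_mem_nil, or_false] at h
    obtain ⟨qe, hq, hpe⟩ := h
    obtain ⟨h1, h2⟩ := ih qe hq
    push_cast
    rcases hpe with h | h <;> subst h <;> constructor <;> simp <;> nlinarith

lemma Sb_step_le (a E : ℝ) (ha0 : 0 ≤ a) (ha1 : a ≤ 1) (hE0 : 0 ≤ E) :
    ∀ L : List (ℝ × ℝ), (∀ pe ∈ L, 0 ≤ pe.2 ∧ pe.2 ≤ E) →
      Sb (step a L) ≤ (E + 1) * Sb L := by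
  intro L
  induction L with
  | nil => intro _; simp [Sb, step]
  | cons pe L ih =>
    intro hL
    obtain ⟨h1, h2⟩ := hL pe (List.mem_cons_self)
    have hL' := fun qe hq => hL qe (List.mem_cons_of_mem _ hq)
    have ihL := ih hL'
    rw [step_cons, Sb_cons, Sb_cons, Sb_cons]
    have e1 : |(-pe.1 * pe.2)| = |pe.1| * pe.2 := by
      rw [abs_mul, abs_neg, abs_of_nonneg h1]
    have e2 : |(pe.1 * a)| = |pe.1| * a := by
      rw [abs_mul, abs_of_nonneg ha0]
    rw [e1, e2]
    have hp := abs_nonneg pe.1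
    nlinarith [Sb_nonneg L, Sb_nonneg (step a L)]

lemma LL_Sb (a : ℝ) (ha0 : 0 ≤ a) (ha1 : a ≤ 1) (r : ℕ) :
    Sb (LL a r) ≤ (2 * (r : ℝ)) ^ r := by
  induction r with
  | zero => simp [LL, Sb]
  | succ r ih =>
    have hstep := Sb_step_le a (2 * (r : ℝ)) ha0 ha1 (by positivity) (LL a r)
      (LL_exp a ha0 ha1 r)
    have h2 : Sb (LL a (r + 1)) ≤ (2 * (r : ℝ) + 1) * Sb (LL a r) := hstep
    have h3 : (2 * (r : ℝ) + 1) * Sb (LL a r) ≤ (2 * (r : ℝ) + 1) * (2 * (r : ℝ)) ^ r :=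
      mul_le_mul_of_nonneg_left ih (by positivity)
    have h4 : (2 * (r : ℝ) + 1) * (2 * (r : ℝ)) ^ r ≤ (2 * ((r : ℝ) + 1)) ^ (r + 1) := by
      have h5 : (2 * (r : ℝ)) ^ r ≤ (2 * ((r : ℝ) + 1)) ^ r :=
        pow_le_pow_left₀ (by positivity) (by linarith) r
      calc (2 * (r : ℝ) + 1) * (2 * (r : ℝ)) ^ r
          ≤ (2 * ((r : ℝ) + 1)) * (2 * ((r : ℝ) + 1)) ^ r := by
            apply mul_le_mul (by linarith) h5 (by positivity) (by positivity)
        _ = (2 * ((r : ℝ) + 1)) ^ (r + 1) := by rw [pow_succ]; ring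
    calc Sb (LL a (r + 1)) ≤ (2 * (r : ℝ) + 1) * Sb (LL a r) := h2
      _ ≤ (2 * (r : ℝ) + 1) * (2 * (r : ℝ)) ^ r := h3
      _ ≤ (2 * ((r : ℝ) + 1)) ^ (r + 1) := h4
      _ = (2 * ((r + 1 : ℕ) : ℝ)) ^ (r + 1) := by push_cast; ring

lemma T_abs_le (a E : ℝ) {x : ℝ} (hx : 0 < x) (hx1 : x ≤ 1) :
    ∀ L : List (ℝ × ℝ), (∀ pe ∈ L, 0 ≤ pe.2 ∧ pe.2 ≤ E) →
      |T a L x| ≤ Sb L * (x ^ (-E) * Real.exp (-x ^ (-a))) := by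
  intro L
  induction L with
  | nil => intro _; simp [T, Sb]
  | cons pe L ih =>
    intro hL
    obtain ⟨h1, h2⟩ := hL pe (List.mem_cons_self)
    have ihL := ih fun qe hq => hL qe (List.mem_cons_of_mem _ hq)
    have hxe : x ^ (-pe.2) ≤ x ^ (-E) :=
      Real.rpow_le_rpow_of_exponent_ge hx hx1 (neg_le_neg h2)
    have hterm : |term a pe x| ≤ |pe.1| * (x ^ (-E) * Real.exp (-x ^ (-a))) := by
      have : |term a pe x| = |pe.1| * (x ^ (-pe.2) * Real.exp (-x ^ (-a))) := by
        simp only [term, abs_mul, mul_assoc]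
        rw [abs_of_pos (Real.rpow_pos_of_pos hx _), abs_of_pos (Real.exp_pos _)]
      rw [this]
      apply mul_le_mul_of_nonneg_left _ (abs_nonneg _)
      apply mul_le_mul_of_nonneg_right hxe (Real.exp_pos _).le
    have hTc : T a (pe :: L) x = term a pe x + T a L x := by simp [T]
    rw [hTc, Sb_cons]
    calc |term a pe x + T a L x| ≤ |term a pe x| + |T a L x| := abs_add_le _ _
      _ ≤ |pe.1| * (x ^ (-E) * Real.exp (-x ^ (-a)))
          + Sb L * (x ^ (-E) * Real.exp (-x ^ (-a))) := add_le_add hterm ihL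
      _ = (|pe.1| + Sb L) * (x ^ (-E) * Real.exp (-x ^ (-a))) := by ring

lemma tendsto_aux (a b : ℝ) (ha : 0 < a) :
    Tendsto (fun x : ℝ => x ^ (-b) * Real.exp (-x ^ (-a))) (𝓝[>] 0) (𝓝 0) := by
  have h1 : Tendsto (fun x : ℝ => x ^ (-a)) (𝓝[>] (0:ℝ)) atTop := by
    have h := (tendsto_rpow_atTop ha).comp tendsto_inv_nhdsGT_zero
    refine h.congr' ?_
    filter_upwards [self_mem_nhdsWithin] with x hx
    have hx0 : (0:ℝ) ≤ x := le_of_lt hx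
    show (x⁻¹) ^ a = x ^ (-a)
    rw [← Real.rpow_neg_one, ← Real.rpow_mul hx0]
    norm_num
  have h2 : Tendsto (fun s : ℝ => s ^ (b / a) * Real.exp (-s)) atTop (𝓝 0) := by
    have h := tendsto_rpow_mul_exp_neg_mul_atTop_nhds_zero (b / a) 1 one_pos
    simpa using h
  refine (h2.comp h1).congr' ?_
  filter_upwards [self_mem_nhdsWithin] with x hx
  show (x ^ (-a)) ^ (b / a) * Real.exp (-x ^ (-a)) = _
  rw [← Real.rpow_mul (le_of_lt hx)]
  congr 2
  field_simp

lemma key_ineq (a : ℝ) {s m : ℝ} (hs : 0 < s) (hm : 0 ≤ m) :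
    s ^ m * Real.exp (-s) ≤ (2 * m) ^ m * Real.exp (-(s / 2)) := by
  rcases eq_or_lt_of_le hm with h | hm'
  · subst h
    simp only [Real.rpow_zero, one_mul]
    exact Real.exp_le_exp.mpr (by linarith)
  · have hms : s = (2 * m) * (s / (2 * m)) := by field_simp
    have h1 : s / (2 * m) ≤ Real.exp (s / (2 * m)) := by
      have := Real.add_one_le_exp (s / (2 * m))
      linarith
    have h3 : (s / (2 * m)) ^ m ≤ Real.exp (s / 2) := by
      calc (s / (2 * m)) ^ m ≤ (Real.exp (s / (2 * m))) ^ m :=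
            Real.rpow_le_rpow (by positivity) h1 hm
        _ = Real.exp (s / 2) := by
            rw [← Real.exp_mul]
            congr 1
            field_simp
    have h2 : s ^ m ≤ (2 * m) ^ m * Real.exp (s / 2) := by
      calc s ^ m = ((2 * m) * (s / (2 * m))) ^ m := by rw [← hms]
        _ = (2 * m) ^ m * (s / (2 * m)) ^ m :=
            Real.mul_rpow (by positivity) (by positivity)
        _ ≤ (2 * m) ^ m * Real.exp (s / 2) :=
            mul_le_mul_of_nonneg_left h3 (by positivity)
    calc s ^ m * Real.exp (-s) ≤ ((2 * m) ^ m * Real.exp (s / 2)) * Real.exp (-s) :=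
          mul_le_mul_of_nonneg_right h2 (Real.exp_pos _).le
      _ = (2 * m) ^ m * Real.exp (-(s / 2)) := by
          rw [mul_assoc, ← Real.exp_add]
          congr 2
          ring

lemma iteratedDeriv_phi0_zero (a : ℝ) (ha0 : 0 < a) (ha1 : a ≤ 1) (r : ℕ) :
    iteratedDeriv r (phi0 a 0) 0 = 0 := by
  induction r with
  | zero => simp [phi0, Real.sign_zero]
  | succ r ih =>
    rw [iteratedDeriv_succ]
    have key : HasDerivAt (iteratedDeriv r (phi0 a 0)) 0 0 := by
      rw [hasDerivAt_iff_tendsto_slope]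
      have hb := ((tendsto_aux a (2 * (r : ℝ) + 1) ha0).const_mul (Sb (LL a r))).comp
        tendsto_abs_nhdsNE_zero
      rw [mul_zero] at hb
      apply squeeze_zero_norm' _ hb
      have h1 : ∀ᶠ y : ℝ in 𝓝 0, y ∈ Set.Ioo (-1 : ℝ) 1 :=
        Ioo_mem_nhds (by norm_num) (by norm_num)
      filter_upwards [nhdsWithin_le_nhds h1, self_mem_nhdsWithin] with y h1y h2y
      have hy : y ≠ 0 := h2y
      have habs : 0 < |y| := abs_pos.mpr hy
      have habs1 : |y| ≤ 1 := le_of_lt (abs_lt.mpr ⟨h1y.1, h1y.2⟩)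
      have hval : |iteratedDeriv r (phi0 a 0) y| = |T a (LL a r) (|y|)| := by
        rcases lt_or_gt_of_ne hy with hneg | hpos
        · have e1 : |y| = -y := abs_of_neg hneg
          have h := abs_iteratedDeriv_neg a r (-y)
          rw [neg_neg] at h
          rw [h, iteratedDeriv_phi0_pos a r (-y) (by linarith), e1]
        · rw [abs_of_pos hpos, iteratedDeriv_phi0_pos a r y hpos]
      have hr1 : |y| ^ (-(2 * (r : ℝ) + 1)) = |y| ^ (-(2 * (r : ℝ))) / |y| := by
        rw [show -(2 * (r : ℝ) + 1) = -(2 * (r : ℝ)) + (-1) by ring, Real.rpow_add habs,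
          Real.rpow_neg_one]
        ring
      calc ‖slope (iteratedDeriv r (phi0 a 0)) 0 y‖
          = |iteratedDeriv r (phi0 a 0) y| / |y| := by
            rw [slope_def_field, ih, sub_zero, sub_zero, Real.norm_eq_abs, abs_div]
        _ = |T a (LL a r) (|y|)| / |y| := by rw [hval]
        _ ≤ (Sb (LL a r) * (|y| ^ (-(2 * (r : ℝ))) * Real.exp (-|y| ^ (-a)))) / |y| := by
            gcongr
            exact T_abs_le a (2 * (r : ℝ)) habs habs1 (LL a r) (LL_exp a ha0.le ha1 r)
        _ = Sb (LL a r) * (|y| ^ (-(2 * (r : ℝ) + 1)) * Real.exp (-|y| ^ (-a))) := by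
            rw [hr1]; ring
    exact key.deriv

end Stmt13

set_option maxHeartbeats 2000000 in
/-- Fix `0 < a < 1/10` and `c`.  There is a threshold `Q` (depending on `a`) such
that for every integer `q ≥ Q`, every `r ≤ ⌊q^a⌋` and every `x` with
`|x - c| ≤ 1/q²`, one has `|φ₀^{(r)}(x)| ≤ e^{-q^{2a}/4}`. -/
theorem stmt13 (a c : ℝ) (ha0 : 0 < a) (ha1 : a < 1 / 10) :
    ∃ Q : ℕ, ∀ q : ℕ, Q ≤ q → ∀ r : ℕ, r ≤ ⌊(q : ℝ) ^ a⌋₊ →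
      ∀ x : ℝ, |x - c| ≤ 1 / (q : ℝ) ^ 2 →
        |iteratedDeriv r (phi0 a c) x| ≤ Real.exp (-(q : ℝ) ^ (2 * a) / 4) := by
  classical
  have ha1' : a ≤ 1 := by linarith
  refine ⟨⌈((4096 : ℝ) / a ^ 4) ^ (1 / a)⌉₊ + 1, fun q hq r hr x hx => ?_⟩
  have hq1 : 1 ≤ q := le_trans (Nat.le_add_left 1 _) hq
  have hq0 : (0 : ℝ) < q := by exact_mod_cast hq1
  have hshift : ∀ y : ℝ, iteratedDeriv r (phi0 a c) y
      = iteratedDeriv r (phi0 a 0) (y - c) := by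
    intro y
    have hfe : phi0 a c = fun z => phi0 a 0 (z + (-c)) := by
      funext z
      simp [phi0, sub_eq_add_neg]
    rw [hfe, iteratedDeriv_comp_add_const]
    simp [sub_eq_add_neg]
  obtain ⟨u, hu⟩ : ∃ u : ℝ, u = (q : ℝ) ^ a := ⟨_, rfl⟩
  have hu0 : 0 < u := hu ▸ Real.rpow_pos_of_pos hq0 a
  have hqQ : ((4096 : ℝ) / a ^ 4) ^ (1 / a) ≤ (q : ℝ) := by
    have h1 : (((4096 : ℝ) / a ^ 4) ^ (1 / a))
        ≤ (⌈((4096 : ℝ) / a ^ 4) ^ (1 / a)⌉₊ : ℝ) := Nat.le_ceil _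
    have h2 : ((⌈((4096 : ℝ) / a ^ 4) ^ (1 / a)⌉₊ : ℕ) : ℝ) ≤ (q : ℝ) := by
      exact_mod_cast le_trans (Nat.le_succ _) hq
    linarith
  have hu_big : 4096 / a ^ 4 ≤ u := by
    have h0 : (0 : ℝ) ≤ 4096 / a ^ 4 := by positivity
    have h := Real.rpow_le_rpow (Real.rpow_nonneg h0 _) hqQ ha0.le
    rw [← Real.rpow_mul h0, one_div_mul_cancel ha0.ne', Real.rpow_one] at h
    rw [hu]
    exact h
  obtain ⟨v, hv⟩ : ∃ v : ℝ, v = Real.sqrt u := ⟨_, rfl⟩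
  have hv0 : 0 < v := hv ▸ Real.sqrt_pos.mpr hu0
  have hvv : v ^ 2 = u := hv ▸ Real.sq_sqrt hu0.le
  have hva : 64 ≤ a ^ 2 * v := by
    have h1 : (4096 : ℝ) ≤ u * a ^ 4 := by
      rw [div_le_iff₀ (by positivity)] at hu_big; exact hu_big
    have h1' : (4096 : ℝ) ≤ v ^ 2 * a ^ 4 := by rw [hvv]; exact h1
    nlinarith [h1', mul_pos (mul_pos ha0 ha0) hv0]
  have ha2 : a ^ 2 ≤ 1 := by nlinarith
  have h64v : 64 ≤ v := by nlinarith [hva, hv0]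
  have hu4096 : (4096 : ℝ) ≤ u := by nlinarith [hvv, h64v, hv0]
  have hlogu : Real.log u ≤ 2 * v := by
    rw [← hvv, Real.log_pow]
    have := Real.log_le_sub_one_of_pos hv0
    push_cast
    linarith
  have hrfloor : (r : ℝ) ≤ u := by
    have h1 : (r : ℝ) ≤ (⌊(q : ℝ) ^ a⌋₊ : ℝ) := Nat.cast_le.mpr hr
    have h2 : ((⌊(q : ℝ) ^ a⌋₊ : ℕ) : ℝ) ≤ (q : ℝ) ^ a :=
      Nat.floor_le (Real.rpow_nonneg hq0.le a)
    rw [hu]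
    linarith
  have SbB : Stmt13.Sb (Stmt13.LL a r) ≤ Real.exp (u ^ 2 / 8) := by
    have c1 : Stmt13.Sb (Stmt13.LL a r) ≤ (2 * (r : ℝ)) ^ r := Stmt13.LL_Sb a ha0.le ha1' r
    have c2 : (2 * (r : ℝ)) ^ r ≤ (2 * u) ^ r :=
      pow_le_pow_left₀ (by positivity) (by linarith) r
    have c3 : (2 * u) ^ r = (2 * u) ^ ((r : ℕ) : ℝ) := (Real.rpow_natCast _ r).symm
    have c4 : (2 * u) ^ ((r : ℕ) : ℝ) ≤ (2 * u) ^ u :=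
      Real.rpow_le_rpow_of_exponent_le (by linarith) hrfloor
    have c5 : (2 * u) ^ u = Real.exp (Real.log (2 * u) * u) :=
      Real.rpow_def_of_pos (by positivity) u
    have hl2 : Real.log (2 * u) ≤ 1 + 2 * v := by
      rw [Real.log_mul two_ne_zero hu0.ne']
      have := Real.log_le_sub_one_of_pos (show (0 : ℝ) < 2 by norm_num)
      linarith
    have c6 : Real.log (2 * u) * u ≤ u ^ 2 / 8 := by
      have h3 : 1 + 2 * v ≤ u / 8 := by
        nlinarith [mul_le_mul_of_nonneg_left h64v hv0.le]
      have h4 := mul_le_mul_of_nonneg_right hl2 hu0.le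
      have h5 := mul_le_mul_of_nonneg_right h3 hu0.le
      nlinarith
    calc Stmt13.Sb (Stmt13.LL a r) ≤ (2 * (r : ℝ)) ^ r := c1
      _ ≤ (2 * u) ^ r := c2
      _ = (2 * u) ^ ((r : ℕ) : ℝ) := c3
      _ ≤ (2 * u) ^ u := c4
      _ = Real.exp (Real.log (2 * u) * u) := c5
      _ ≤ Real.exp (u ^ 2 / 8) := Real.exp_le_exp.mpr c6
  obtain ⟨m, hm⟩ : ∃ m : ℝ, m = 2 * (r : ℝ) / a := ⟨_, rfl⟩
  have hm0 : 0 ≤ m := hm ▸ div_nonneg (by positivity) ha0.le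
  obtain ⟨M, hM⟩ : ∃ M : ℝ, M = 2 * u / a := ⟨_, rfl⟩
  have hM0 : 0 < M := hM ▸ div_pos (by positivity) ha0
  have hmM : m ≤ M := by
    rw [hm, hM]
    exact (div_le_div_iff_of_pos_right ha0).mpr (by linarith)
  have h2M1 : 1 ≤ 2 * M := by
    have h : 2 * M = 4 * u / a := by rw [hM]; ring
    rw [h, le_div_iff₀ ha0]
    nlinarith
  have hav : (640 : ℝ) ≤ a * v := by nlinarith [hva, mul_pos ha0 hv0]
  have mB : (2 * m) ^ m ≤ Real.exp (u ^ 2 / 8) := by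
    have c1 : (2 * m) ^ m ≤ (2 * M) ^ m :=
      Real.rpow_le_rpow (by linarith) (by linarith) hm0
    have c2 : (2 * M) ^ m ≤ (2 * M) ^ M := Real.rpow_le_rpow_of_exponent_le h2M1 hmM
    have c3 : (2 * M) ^ M = Real.exp (Real.log (2 * M) * M) :=
      Real.rpow_def_of_pos (by linarith) M
    have hXa : Real.log (2 * M) ≤ a * u / 16 := by
      have hrw : 2 * M = 4 * u / a := by rw [hM]; ring
      rw [hrw, Real.log_div (by positivity) ha0.ne', Real.log_mul (by norm_num) hu0.ne']
      have l4 : Real.log 4 ≤ 3 := by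
        linarith [Real.log_le_sub_one_of_pos (show (0 : ℝ) < 4 by norm_num)]
      have la : -(a * Real.log a) ≤ 1 - a := by
        have h6 := Real.log_le_sub_one_of_pos (show (0 : ℝ) < a⁻¹ by positivity)
        rw [Real.log_inv] at h6
        have h7 := mul_le_mul_of_nonneg_left h6 ha0.le
        have h8 : a * (a⁻¹ - 1) = 1 - a := by field_simp
        nlinarith [h7, h8]
      have k1 : a * Real.log 4 ≤ a * 3 := mul_le_mul_of_nonneg_left l4 ha0.le
      have k2 : a * Real.log u ≤ a * (2 * v) := mul_le_mul_of_nonneg_left hlogu ha0.le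
      have key : a * (Real.log 4 + Real.log u - Real.log a) ≤ a * (a * u / 16) := by
        have hsq := mul_le_mul_of_nonneg_left hav (show (0 : ℝ) ≤ a * v by positivity)
        nlinarith [k1, k2, la, hav, hvv, ha0.le, hsq]
      exact le_of_mul_le_mul_left (by linarith [key]) ha0
    have c4 : Real.log (2 * M) * M ≤ u ^ 2 / 8 := by
      have h9 := mul_le_mul_of_nonneg_right hXa hM0.le
      have he : (a * u / 16) * M = u ^ 2 / 8 := by
        rw [hM]
        field_simp
        ring
      linarith [he ▸ h9]
    calc (2 * m) ^ m ≤ (2 * M) ^ m := c1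
      _ ≤ (2 * M) ^ M := c2
      _ = Real.exp (Real.log (2 * M) * M) := c3
      _ ≤ Real.exp (u ^ 2 / 8) := Real.exp_le_exp.mpr c4
  have hu2 : u ^ 2 = (q : ℝ) ^ (2 * a) := by
    rw [hu, ← Real.rpow_natCast ((q : ℝ) ^ a) 2, ← Real.rpow_mul hq0.le]
    norm_num [mul_comm]
  rcases eq_or_ne x c with rfl | hxc
  · rw [hshift x, sub_self, Stmt13.iteratedDeriv_phi0_zero a ha0 ha1' r, abs_zero]
    exact (Real.exp_pos _).le
  · obtain ⟨t, htdef⟩ : ∃ t : ℝ, t = |x - c| := ⟨_, rfl⟩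
    have ht0 : 0 < t := htdef ▸ abs_pos.mpr (sub_ne_zero.mpr hxc)
    have hxt : t ≤ 1 / (q : ℝ) ^ 2 := htdef ▸ hx
    have habs2 : |iteratedDeriv r (phi0 a c) x| = |Stmt13.T a (Stmt13.LL a r) t| := by
      rw [hshift x]
      rcases lt_or_gt_of_ne (sub_ne_zero.mpr hxc) with hneg | hpos
      · have e1 : t = -(x - c) := by rw [htdef, abs_of_neg hneg]
        have h := Stmt13.abs_iteratedDeriv_neg a r (x - c)
        rw [← h, ← e1, Stmt13.iteratedDeriv_phi0_pos a r t ht0]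
      · have e1 : x - c = t := by rw [htdef, abs_of_pos hpos]
        rw [e1, Stmt13.iteratedDeriv_phi0_pos a r t ht0]
    rw [habs2]
    have ht1 : t ≤ 1 := by
      have h2 : 1 / (q : ℝ) ^ 2 ≤ 1 := by
        rw [div_le_one (by positivity)]
        nlinarith [show (1 : ℝ) ≤ (q : ℝ) from by exact_mod_cast hq1]
      linarith
    have main := Stmt13.T_abs_le a (2 * (r : ℝ)) ht0 ht1 (Stmt13.LL a r)
      (Stmt13.LL_exp a ha0.le ha1' r)
    obtain ⟨s, hsdef⟩ : ∃ s : ℝ, s = t ^ (-a) := ⟨_, rfl⟩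
    have hs0 : 0 < s := hsdef ▸ Real.rpow_pos_of_pos ht0 _
    have hss0 : (q : ℝ) ^ (2 * a) ≤ s := by
      have hq2 : 1 / (q : ℝ) ^ 2 = (q : ℝ) ^ (-2 : ℝ) := by
        rw [Real.rpow_neg hq0.le, one_div]
        congr 1
        rw [← Real.rpow_natCast (q : ℝ) 2]
        norm_num
      have h1 : t ^ a ≤ ((q : ℝ) ^ (-2 : ℝ)) ^ a := by
        apply Real.rpow_le_rpow ht0.le _ ha0.le
        rw [← hq2]
        exact hxt
      have h2 : ((((q : ℝ) ^ (-2 : ℝ)) ^ a))⁻¹ ≤ (t ^ a)⁻¹ :=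
        inv_anti₀ (Real.rpow_pos_of_pos ht0 a) h1
      have h3 : (t ^ a)⁻¹ = s := by rw [hsdef, Real.rpow_neg ht0.le]
      have h4 : ((((q : ℝ) ^ (-2 : ℝ)) ^ a))⁻¹ = (q : ℝ) ^ (2 * a) := by
        rw [← Real.rpow_neg (Real.rpow_nonneg hq0.le _), ← Real.rpow_mul hq0.le]
        norm_num
      rw [h3, h4] at h2
      exact h2
    have hts : t ^ (-(2 * (r : ℝ))) = s ^ m := by
      rw [hsdef, hm, ← Real.rpow_mul ht0.le]
      congr 1
      field_simp
    have hexp : Real.exp (-t ^ (-a)) = Real.exp (-s) := by rw [hsdef]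
    calc |Stmt13.T a (Stmt13.LL a r) t|
        ≤ Stmt13.Sb (Stmt13.LL a r) * (t ^ (-(2 * (r : ℝ))) * Real.exp (-t ^ (-a))) := main
      _ = Stmt13.Sb (Stmt13.LL a r) * (s ^ m * Real.exp (-s)) := by rw [hts, hexp]
      _ ≤ Real.exp (u ^ 2 / 8) * ((2 * m) ^ m * Real.exp (-(s / 2))) := by
          apply mul_le_mul SbB (Stmt13.key_ineq a hs0 hm0) (by positivity) (Real.exp_pos _).le
      _ ≤ Real.exp (u ^ 2 / 8) * (Real.exp (u ^ 2 / 8) * Real.exp (-(s / 2))) := by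
          apply mul_le_mul_of_nonneg_left _ (Real.exp_pos _).le
          exact mul_le_mul_of_nonneg_right mB (Real.exp_pos _).le
      _ ≤ Real.exp (u ^ 2 / 8) * (Real.exp (u ^ 2 / 8)
            * Real.exp (-((q : ℝ) ^ (2 * a) / 2))) := by
          apply mul_le_mul_of_nonneg_left _ (Real.exp_pos _).le
          apply mul_le_mul_of_nonneg_left _ (Real.exp_pos _).le
          exact Real.exp_le_exp.mpr (by linarith)
      _ = Real.exp (u ^ 2 / 8 + (u ^ 2 / 8 + -((q : ℝ) ^ (2 * a) / 2))) := by
          rw [← Real.exp_add, ← Real.exp_add]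
      _ ≤ Real.exp (-(q : ℝ) ^ (2 * a) / 4) := Real.exp_le_exp.mpr (by linarith [hu2])
end
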